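/- arXiv:1312.1136 — 4 statements merged into one kernel-verified Lean document; each statement's English description precedes it below -/
import Mathlib

section
/- Every sequent derivable in the multi-succedent intuitionistic sequent calculus LJpm is intuitionistically valid: for every Kripke model ⟨W,⪯,V⟩ and σ ∈ W, if σ forces every formula in Γ then σ forces some formula in Δ. -/
/-- Propositional formulas: atoms, ⊥, ∨, ∧, ⊃. -/
inductive PFormula : Type
  | atom : ℕ → PFormula
  | bot  : PFormula
  | disj : PFormula → PFormula → PFormula
  | conj : PFormula → PFormula → PFormula
  | impl : PFormula → PFormula → PFormula
  deriving DecidableEq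

/-- A Kripke model for intuitionistic propositional logic:
a quasi-ordered nonempty set of worlds with a monotone valuation. -/
structure KripkeModel where
  W : Type
  ne : Nonempty W
  le : W → W → Prop
  le_refl : ∀ w, le w w
  le_trans : ∀ {a b c}, le a b → le b c → le a c
  V : W → Set ℕ
  V_mono : ∀ {a b}, le a b → V a ⊆ V b

/-- Kripke forcing. -/
def KripkeModel.force (M : KripkeModel) : M.W → PFormula → Prop
  | w, .atom p => p ∈ M.V w
  | _, .bot => False
  | w, .disj a b => M.force w a ∨ M.force w b
  | w, .conj a b => M.force w a ∧ M.force w b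
  | w, .impl a b => ∀ v, M.le w v → M.force v a → M.force v b

/-- The multi-succedent sequent calculus LJpm for intuitionistic propositional
logic (sequents are pairs of finite sets of formulas; weakening is built into
the set formulation of axioms and rules). -/
inductive LJpm : Finset PFormula → Finset PFormula → Prop
  | axAtom {Γ Δ : Finset PFormula} {p : ℕ} :
      PFormula.atom p ∈ Γ → PFormula.atom p ∈ Δ → LJpm Γ Δ
  | axBot {Γ Δ : Finset PFormula} : PFormula.bot ∈ Γ → LJpm Γ Δ
  | disjL {Γ Δ : Finset PFormula} {a b : PFormula} : a.disj b ∈ Γ →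
      LJpm (insert a Γ) Δ → LJpm (insert b Γ) Δ → LJpm Γ Δ
  | disjR {Γ Δ : Finset PFormula} {a b : PFormula} : a.disj b ∈ Δ →
      LJpm Γ (insert a (insert b Δ)) → LJpm Γ Δ
  | conjL {Γ Δ : Finset PFormula} {a b : PFormula} : a.conj b ∈ Γ →
      LJpm (insert a (insert b Γ)) Δ → LJpm Γ Δ
  | conjR {Γ Δ : Finset PFormula} {a b : PFormula} : a.conj b ∈ Δ →
      LJpm Γ (insert a Δ) → LJpm Γ (insert b Δ) → LJpm Γ Δ
  | implL {Γ Δ : Finset PFormula} {a b : PFormula} : a.impl b ∈ Γ →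
      LJpm Γ (insert a Δ) → LJpm (insert b Γ) Δ → LJpm Γ Δ
  | implR {Γ Δ : Finset PFormula} {a b : PFormula} : a.impl b ∈ Δ →
      LJpm (insert a Γ) {b} → LJpm Γ Δ

/-- Intuitionistic validity of a sequent Γ ⇒ Δ. -/
def Valid (Γ Δ : Finset PFormula) : Prop :=
  ∀ (M : KripkeModel) (w : M.W),
    (∀ γ ∈ Γ, M.force w γ) → ∃ δ ∈ Δ, M.force w δ

lemma force_mono (M : KripkeModel) {w v : M.W} (hwv : M.le w v) :
    ∀ φ, M.force w φ → M.force v φ := by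
  intro φ
  induction φ with
  | atom p => exact fun h => M.V_mono hwv h
  | bot => exact id
  | disj a b iha ihb => exact fun h => h.elim (fun h => Or.inl (iha h)) (fun h => Or.inr (ihb h))
  | conj a b iha ihb => exact fun h => ⟨iha h.1, ihb h.2⟩
  | impl a b iha ihb => exact fun h u hvu ha => h u (M.le_trans hwv hvu) ha

/-- soundness of LJpm for Kripke semantics. -/
theorem LJpm_sound {Γ Δ : Finset PFormula} (h : LJpm Γ Δ) : Valid Γ Δ := by
  induction h with
  | axAtom hΓ hΔ => exact fun M w hw => ⟨_, hΔ, hw _ hΓ⟩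
  | axBot hΓ => exact fun M w hw => absurd (hw _ hΓ) id
  | disjL hm h1 h2 ih1 ih2 =>
    intro M w hw
    rcases hw _ hm with ha | hb
    · exact ih1 M w (fun γ hγ => by
        rcases Finset.mem_insert.mp hγ with rfl | hγ
        exacts [ha, hw _ hγ])
    · exact ih2 M w (fun γ hγ => by
        rcases Finset.mem_insert.mp hγ with rfl | hγ
        exacts [hb, hw _ hγ])
  | disjR hm h1 ih1 =>
    intro M w hw
    rcases ih1 M w hw with ⟨δ, hδ, hf⟩
    rcases Finset.mem_insert.mp hδ with rfl | hδ
    · exact ⟨_, hm, Or.inl hf⟩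
    rcases Finset.mem_insert.mp hδ with rfl | hδ
    · exact ⟨_, hm, Or.inr hf⟩
    · exact ⟨δ, hδ, hf⟩
  | conjL hm h1 ih1 =>
    intro M w hw
    have hab := hw _ hm
    exact ih1 M w (fun γ hγ => by
      rcases Finset.mem_insert.mp hγ with rfl | hγ
      · exact hab.1
      rcases Finset.mem_insert.mp hγ with rfl | hγ
      exacts [hab.2, hw _ hγ])
  | conjR hm h1 h2 ih1 ih2 =>
    intro M w hw
    rcases ih1 M w hw with ⟨δ, hδ, hf⟩
    rcases Finset.mem_insert.mp hδ with rfl | hδ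
    · rcases ih2 M w hw with ⟨δ', hδ', hf'⟩
      rcases Finset.mem_insert.mp hδ' with rfl | hδ'
      · exact ⟨_, hm, hf, hf'⟩
      · exact ⟨δ', hδ', hf'⟩
    · exact ⟨δ, hδ, hf⟩
  | implL hm h1 h2 ih1 ih2 =>
    intro M w hw
    rcases ih1 M w hw with ⟨δ, hδ, hf⟩
    rcases Finset.mem_insert.mp hδ with rfl | hδ
    · have hb := hw _ hm w (M.le_refl w) hf
      exact ih2 M w (fun γ hγ => by
        rcases Finset.mem_insert.mp hγ with rfl | hγ
        exacts [hb, hw _ hγ])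
    · exact ⟨δ, hδ, hf⟩
  | @implR _ _ a b hm h1 ih1 =>
    intro M w hw
    refine ⟨_, hm, fun v hv ha => ?_⟩
    rcases ih1 M v (fun γ hγ => by
      rcases Finset.mem_insert.mp hγ with rfl | hγ
      exacts [ha, force_mono M hv γ (hw _ hγ)]) with ⟨δ, hδ, hf⟩
    rcases Finset.mem_singleton.mp hδ
    exact hf
end

section
/- The intuitionistic propositional sequent calculus LJpm is complete: every intuitionistically valid sequent Γ ⇒ Δ (valid in all Kripke models) is derivable in LJpm without cut. -/
namespace LJpmAux

open PFormula Finset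

/-- Subformula closure of a single formula. -/
def Sub : PFormula → Finset PFormula
  | .atom p => {PFormula.atom p}
  | .bot => {PFormula.bot}
  | .disj a b => insert (PFormula.disj a b) (Sub a ∪ Sub b)
  | .conj a b => insert (PFormula.conj a b) (Sub a ∪ Sub b)
  | .impl a b => insert (PFormula.impl a b) (Sub a ∪ Sub b)

lemma mem_Sub_self (x : PFormula) : x ∈ Sub x := by
  cases x <;> simp [Sub]

lemma Sub_trans : ∀ (x : PFormula), ∀ y ∈ Sub x, Sub y ⊆ Sub x := by
  intro x
  induction x with
  | atom p => intro y hy; simp [Sub] at hy; subst hy; simp [Sub]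
  | bot => intro y hy; simp [Sub] at hy; subst hy; simp [Sub]
  | disj a b iha ihb =>
      intro y hy
      rcases Finset.mem_insert.1 hy with h | h
      · subst h; exact subset_rfl
      · rcases Finset.mem_union.1 h with h | h
        · exact (iha y h).trans ((Finset.subset_union_left).trans (Finset.subset_insert _ _))
        · exact (ihb y h).trans ((Finset.subset_union_right).trans (Finset.subset_insert _ _))
  | conj a b iha ihb =>
      intro y hy
      rcases Finset.mem_insert.1 hy with h | h
      · subst h; exact subset_rfl
      · rcases Finset.mem_union.1 h with h | h
        · exact (iha y h).trans ((Finset.subset_union_left).trans (Finset.subset_insert _ _))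
        · exact (ihb y h).trans ((Finset.subset_union_right).trans (Finset.subset_insert _ _))
  | impl a b iha ihb =>
      intro y hy
      rcases Finset.mem_insert.1 hy with h | h
      · subst h; exact subset_rfl
      · rcases Finset.mem_union.1 h with h | h
        · exact (iha y h).trans ((Finset.subset_union_left).trans (Finset.subset_insert _ _))
        · exact (ihb y h).trans ((Finset.subset_union_right).trans (Finset.subset_insert _ _))

def Closed (U : Finset PFormula) : Prop := ∀ x ∈ U, Sub x ⊆ U

lemma closure_closed (S : Finset PFormula) : Closed (S.biUnion Sub) := by
  intro x hx
  obtain ⟨s, hs, hxs⟩ := Finset.mem_biUnion.1 hx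
  intro y hy
  exact Finset.mem_biUnion.2 ⟨s, hs, Sub_trans s x hxs hy⟩

lemma subset_closure (S : Finset PFormula) : S ⊆ S.biUnion Sub :=
  fun x hx => Finset.mem_biUnion.2 ⟨x, hx, mem_Sub_self x⟩

lemma left_mem_Sub {a b : PFormula} :
    a ∈ Sub (disj a b) ∧ a ∈ Sub (conj a b) ∧ a ∈ Sub (impl a b) := by
  refine ⟨?_, ?_, ?_⟩ <;> simp [Sub, mem_Sub_self]

lemma right_mem_Sub {a b : PFormula} :
    b ∈ Sub (disj a b) ∧ b ∈ Sub (conj a b) ∧ b ∈ Sub (impl a b) := by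
  refine ⟨?_, ?_, ?_⟩ <;> simp [Sub, mem_Sub_self]

/-- Saturation conditions for an underivable pair. -/
def SatCond (Γ Δ : Finset PFormula) : Prop :=
  (∀ a b, disj a b ∈ Γ → a ∈ Γ ∨ b ∈ Γ) ∧
  (∀ a b, disj a b ∈ Δ → a ∈ Δ ∧ b ∈ Δ) ∧
  (∀ a b, conj a b ∈ Γ → a ∈ Γ ∧ b ∈ Γ) ∧
  (∀ a b, conj a b ∈ Δ → a ∈ Δ ∨ b ∈ Δ) ∧
  (∀ a b, impl a b ∈ Γ → a ∈ Δ ∨ b ∈ Γ)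

structure Sat where
  Γ : Finset PFormula
  Δ : Finset PFormula
  np : ¬ LJpm Γ Δ
  sat : SatCond Γ Δ

lemma card_sdiff_insert_lt {U S : Finset PFormula} {x : PFormula}
    (hx : x ∈ U) (hnx : x ∉ S) : (U \ insert x S).card < (U \ S).card := by
  have h1 : U \ insert x S = (U \ S).erase x := by
    ext y
    simp only [Finset.mem_sdiff, Finset.mem_erase, Finset.mem_insert]
    tauto
  rw [h1]
  exact Finset.card_erase_lt_of_mem (Finset.mem_sdiff.2 ⟨hx, hnx⟩)

lemma card_sdiff_anti {U S T : Finset PFormula} (h : S ⊆ T) :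
    (U \ T).card ≤ (U \ S).card :=
  Finset.card_le_card (Finset.sdiff_subset_sdiff subset_rfl h)

lemma step {U Γ Δ : Finset PFormula} (hU : Closed U) (hΓ : Γ ⊆ U) (hΔ : Δ ⊆ U)
    (hnp : ¬ LJpm Γ Δ) (hns : ¬ SatCond Γ Δ) :
    ∃ Γ' Δ', Γ ⊆ Γ' ∧ Δ ⊆ Δ' ∧ Γ' ⊆ U ∧ Δ' ⊆ U ∧ ¬ LJpm Γ' Δ' ∧
      (U \ Γ').card + (U \ Δ').card < (U \ Γ).card + (U \ Δ).card := by
  by_cases h1 : ∀ a b, disj a b ∈ Γ → a ∈ Γ ∨ b ∈ Γ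
  · by_cases h2 : ∀ a b, disj a b ∈ Δ → a ∈ Δ ∧ b ∈ Δ
    · by_cases h3 : ∀ a b, conj a b ∈ Γ → a ∈ Γ ∧ b ∈ Γ
      · by_cases h4 : ∀ a b, conj a b ∈ Δ → a ∈ Δ ∨ b ∈ Δ
        · by_cases h5 : ∀ a b, impl a b ∈ Γ → a ∈ Δ ∨ b ∈ Γ
          · exact absurd ⟨h1, h2, h3, h4, h5⟩ hns
          · -- implL violated
            push_neg at h5
            obtain ⟨a, b, hm, ha, hb⟩ := h5
            have haU : a ∈ U := hU _ (hΓ hm) left_mem_Sub.2.2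
            have hbU : b ∈ U := hU _ (hΓ hm) right_mem_Sub.2.2
            have hor : ¬ LJpm Γ (insert a Δ) ∨ ¬ LJpm (insert b Γ) Δ := by
              by_contra hc
              push_neg at hc
              exact hnp (LJpm.implL hm hc.1 hc.2)
            rcases hor with hn | hn
            · refine ⟨Γ, insert a Δ, subset_rfl, Finset.subset_insert _ _, hΓ,
                Finset.insert_subset haU hΔ, hn, ?_⟩
              have := card_sdiff_insert_lt haU ha
              omega
            · refine ⟨insert b Γ, Δ, Finset.subset_insert _ _, subset_rfl,
                Finset.insert_subset hbU hΓ, hΔ, hn, ?_⟩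
              have := card_sdiff_insert_lt hbU hb
              omega
        · -- conjR violated
          push_neg at h4
          obtain ⟨a, b, hm, ha, hb⟩ := h4
          have haU : a ∈ U := hU _ (hΔ hm) left_mem_Sub.2.1
          have hbU : b ∈ U := hU _ (hΔ hm) right_mem_Sub.2.1
          have hor : ¬ LJpm Γ (insert a Δ) ∨ ¬ LJpm Γ (insert b Δ) := by
            by_contra hc
            push_neg at hc
            exact hnp (LJpm.conjR hm hc.1 hc.2)
          rcases hor with hn | hn
          · refine ⟨Γ, insert a Δ, subset_rfl, Finset.subset_insert _ _, hΓ,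
              Finset.insert_subset haU hΔ, hn, ?_⟩
            have := card_sdiff_insert_lt haU ha
            omega
          · refine ⟨Γ, insert b Δ, subset_rfl, Finset.subset_insert _ _, hΓ,
              Finset.insert_subset hbU hΔ, hn, ?_⟩
            have := card_sdiff_insert_lt hbU hb
            omega
      · -- conjL violated
        push_neg at h3
        obtain ⟨a, b, hm, hab⟩ := h3
        have haU : a ∈ U := hU _ (hΓ hm) left_mem_Sub.2.1
        have hbU : b ∈ U := hU _ (hΓ hm) right_mem_Sub.2.1
        have hn : ¬ LJpm (insert a (insert b Γ)) Δ := fun d => hnp (LJpm.conjL hm d)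
        refine ⟨insert a (insert b Γ), Δ,
          (Finset.subset_insert _ _).trans (Finset.subset_insert _ _), subset_rfl,
          Finset.insert_subset haU (Finset.insert_subset hbU hΓ), hΔ, hn, ?_⟩
        have key : (U \ insert a (insert b Γ)).card < (U \ Γ).card := by
          by_cases hbΓ : b ∈ Γ
          · have hins : insert b Γ = Γ := Finset.insert_eq_self.2 hbΓ
            have ha : a ∉ Γ := fun h => hab h hbΓ
            rw [hins]
            exact card_sdiff_insert_lt haU ha
          · have h1 : (U \ insert a (insert b Γ)).card ≤ (U \ insert b Γ).card :=
              card_sdiff_anti (Finset.subset_insert _ _)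
            have h2 := card_sdiff_insert_lt hbU hbΓ
            omega
        omega
    · -- disjR violated
      push_neg at h2
      obtain ⟨a, b, hm, hab⟩ := h2
      have haU : a ∈ U := hU _ (hΔ hm) left_mem_Sub.1
      have hbU : b ∈ U := hU _ (hΔ hm) right_mem_Sub.1
      have hn : ¬ LJpm Γ (insert a (insert b Δ)) := fun d => hnp (LJpm.disjR hm d)
      refine ⟨Γ, insert a (insert b Δ), subset_rfl,
        (Finset.subset_insert _ _).trans (Finset.subset_insert _ _), hΓ,
        Finset.insert_subset haU (Finset.insert_subset hbU hΔ), hn, ?_⟩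
      have key : (U \ insert a (insert b Δ)).card < (U \ Δ).card := by
        by_cases hbΔ : b ∈ Δ
        · have hins : insert b Δ = Δ := Finset.insert_eq_self.2 hbΔ
          have ha : a ∉ Δ := fun h => hab h hbΔ
          rw [hins]
          exact card_sdiff_insert_lt haU ha
        · have h1 : (U \ insert a (insert b Δ)).card ≤ (U \ insert b Δ).card :=
            card_sdiff_anti (Finset.subset_insert _ _)
          have h2 := card_sdiff_insert_lt hbU hbΔ
          omega
      omega
  · -- disjL violated
    push_neg at h1
    obtain ⟨a, b, hm, ha, hb⟩ := h1
    have haU : a ∈ U := hU _ (hΓ hm) left_mem_Sub.1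
    have hbU : b ∈ U := hU _ (hΓ hm) right_mem_Sub.1
    have hor : ¬ LJpm (insert a Γ) Δ ∨ ¬ LJpm (insert b Γ) Δ := by
      by_contra hc
      push_neg at hc
      exact hnp (LJpm.disjL hm hc.1 hc.2)
    rcases hor with hn | hn
    · refine ⟨insert a Γ, Δ, Finset.subset_insert _ _, subset_rfl,
        Finset.insert_subset haU hΓ, hΔ, hn, ?_⟩
      have := card_sdiff_insert_lt haU ha
      omega
    · refine ⟨insert b Γ, Δ, Finset.subset_insert _ _, subset_rfl,
        Finset.insert_subset hbU hΓ, hΔ, hn, ?_⟩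
      have := card_sdiff_insert_lt hbU hb
      omega

lemma sat_main {U : Finset PFormula} (hU : Closed U) :
    ∀ (n : ℕ) (Γ Δ : Finset PFormula), Γ ⊆ U → Δ ⊆ U →
      (U \ Γ).card + (U \ Δ).card ≤ n → ¬ LJpm Γ Δ →
      ∃ s : Sat, Γ ⊆ s.Γ ∧ Δ ⊆ s.Δ := by
  intro n
  induction n with
  | zero =>
      intro Γ Δ hΓ hΔ hm hnp
      by_cases hs : SatCond Γ Δ
      · exact ⟨⟨Γ, Δ, hnp, hs⟩, subset_rfl, subset_rfl⟩
      · obtain ⟨Γ', Δ', _, _, _, _, _, hlt⟩ := step hU hΓ hΔ hnp hs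
        omega
  | succ n ih =>
      intro Γ Δ hΓ hΔ hm hnp
      by_cases hs : SatCond Γ Δ
      · exact ⟨⟨Γ, Δ, hnp, hs⟩, subset_rfl, subset_rfl⟩
      · obtain ⟨Γ', Δ', hg, hd, hg', hd', hnp', hlt⟩ := step hU hΓ hΔ hnp hs
        obtain ⟨s, hsΓ, hsΔ⟩ := ih Γ' Δ' hg' hd' (by omega) hnp'
        exact ⟨s, hg.trans hsΓ, hd.trans hsΔ⟩

lemma saturate {Γ Δ : Finset PFormula} (hnp : ¬ LJpm Γ Δ) :
    ∃ s : Sat, Γ ⊆ s.Γ ∧ Δ ⊆ s.Δ := by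
  have hΓ : Γ ⊆ (Γ ∪ Δ).biUnion Sub :=
    (Finset.subset_union_left).trans (subset_closure _)
  have hΔ : Δ ⊆ (Γ ∪ Δ).biUnion Sub :=
    (Finset.subset_union_right).trans (subset_closure _)
  exact sat_main (closure_closed (Γ ∪ Δ)) _ Γ Δ hΓ hΔ le_rfl hnp

/-- Canonical Kripke model over saturated pairs. -/
def canon (s0 : Sat) : KripkeModel where
  W := Sat
  ne := ⟨s0⟩
  le s t := s.Γ ⊆ t.Γ
  le_refl _ := subset_rfl
  le_trans h1 h2 := h1.trans h2
  V s := {p | PFormula.atom p ∈ s.Γ}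
  V_mono h := fun _ hp => h hp

lemma truth (s0 : Sat) : ∀ (α : PFormula) (t : Sat),
    (α ∈ t.Γ → (canon s0).force t α) ∧ (α ∈ t.Δ → ¬ (canon s0).force t α) := by
  intro α
  induction α with
  | atom p =>
      intro t
      constructor
      · intro h
        exact h
      · intro h hf
        exact t.np (LJpm.axAtom hf h)
  | bot =>
      intro t
      exact ⟨fun h => absurd (LJpm.axBot h) t.np, fun _ hf => hf⟩
  | disj a b iha ihb =>
      intro t
      constructor
      · intro h
        rcases t.sat.1 a b h with ha | hb
        · exact Or.inl ((iha t).1 ha)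
        · exact Or.inr ((ihb t).1 hb)
      · intro h hf
        obtain ⟨ha, hb⟩ := t.sat.2.1 a b h
        rcases hf with hf | hf
        · exact (iha t).2 ha hf
        · exact (ihb t).2 hb hf
  | conj a b iha ihb =>
      intro t
      constructor
      · intro h
        obtain ⟨ha, hb⟩ := t.sat.2.2.1 a b h
        exact ⟨(iha t).1 ha, (ihb t).1 hb⟩
      · intro h hf
        rcases t.sat.2.2.2.1 a b h with ha | hb
        · exact (iha t).2 ha hf.1
        · exact (ihb t).2 hb hf.2
  | impl a b iha ihb =>
      intro t
      constructor
      · intro h v hle hfa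
        rcases v.sat.2.2.2.2 a b (hle h) with ha | hb
        · exact absurd hfa ((iha v).2 ha)
        · exact (ihb v).1 hb
      · intro h hf
        have hnp : ¬ LJpm (insert a t.Γ) {b} := fun d => t.np (LJpm.implR h d)
        obtain ⟨v, hvΓ, hvΔ⟩ := saturate hnp
        have hle : t.Γ ⊆ v.Γ := (Finset.subset_insert a t.Γ).trans hvΓ
        have hfa : (canon s0).force v a := (iha v).1 (hvΓ (Finset.mem_insert_self a t.Γ))
        exact (ihb v).2 (hvΔ (Finset.mem_singleton_self b)) (hf v hle hfa)

end LJpmAux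

/-- completeness of cut-free LJpm for Kripke semantics. -/
theorem LJpm_complete {Γ Δ : Finset PFormula} (h : Valid Γ Δ) : LJpm Γ Δ := by
  by_contra hnp
  obtain ⟨s, hΓ, hΔ⟩ := LJpmAux.saturate hnp
  obtain ⟨δ, hδ, hfδ⟩ := h (LJpmAux.canon s) s (fun γ hγ => (LJpmAux.truth s γ s).1 (hΓ hγ))
  exact (LJpmAux.truth s δ s).2 (hΔ hδ) hfδ
end

section
/- The cut rule is admissible in LJpm: if Γ ⇒ α,Δ and Γ,α ⇒ Δ are both derivable in (cut-free) LJpm, then Γ ⇒ Δ is derivable in (cut-free) LJpm. -/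
namespace CutAux

open PFormula

/-- Forcing is monotone along the accessibility relation. -/
lemma force_mono (M : KripkeModel) {w v : M.W} (h : M.le w v) :
    ∀ φ, M.force w φ → M.force v φ := by
  intro φ
  induction φ with
  | atom p => exact fun hp => M.V_mono h hp
  | bot => exact fun hf => hf.elim
  | disj a b iha ihb => exact fun hf => hf.elim (fun x => Or.inl (iha x)) (fun x => Or.inr (ihb x))
  | conj a b iha ihb => exact fun hf => ⟨iha hf.1, ihb hf.2⟩
  | impl a b iha ihb =>
      exact fun hf u huv hua => hf u (M.le_trans h huv) hua

/-- Soundness of cut-free LJpm. -/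
lemma soundness {Γ Δ : Finset PFormula} (h : LJpm Γ Δ) : Valid Γ Δ := by
  induction h with
  | axAtom hΓ hΔ =>
      intro M w hw; exact ⟨_, hΔ, hw _ hΓ⟩
  | axBot hΓ =>
      intro M w hw; exact absurd (hw _ hΓ) (fun h => h)
  | disjL hmem h1 h2 ih1 ih2 =>
      intro M w hw
      rcases hw _ hmem with ha | hb
      · exact ih1 M w (by intro γ hγ; rcases Finset.mem_insert.1 hγ with rfl | hγ
                          exacts [ha, hw _ hγ])
      · exact ih2 M w (by intro γ hγ; rcases Finset.mem_insert.1 hγ with rfl | hγ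
                          exacts [hb, hw _ hγ])
  | disjR hmem h1 ih1 =>
      intro M w hw
      rcases ih1 M w hw with ⟨δ, hδ, hfδ⟩
      rcases Finset.mem_insert.1 hδ with rfl | hδ
      · exact ⟨_, hmem, Or.inl hfδ⟩
      · rcases Finset.mem_insert.1 hδ with rfl | hδ
        · exact ⟨_, hmem, Or.inr hfδ⟩
        · exact ⟨δ, hδ, hfδ⟩
  | conjL hmem h1 ih1 =>
      intro M w hw
      have hab := hw _ hmem
      exact ih1 M w (by
        intro γ hγ
        rcases Finset.mem_insert.1 hγ with rfl | hγ
        · exact hab.1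
        · rcases Finset.mem_insert.1 hγ with rfl | hγ
          exacts [hab.2, hw _ hγ])
  | conjR hmem h1 h2 ih1 ih2 =>
      intro M w hw
      rcases ih1 M w hw with ⟨δ, hδ, hfδ⟩
      rcases Finset.mem_insert.1 hδ with rfl | hδ
      · rcases ih2 M w hw with ⟨δ', hδ', hfδ'⟩
        rcases Finset.mem_insert.1 hδ' with rfl | hδ'
        · exact ⟨_, hmem, hfδ, hfδ'⟩
        · exact ⟨δ', hδ', hfδ'⟩
      · exact ⟨δ, hδ, hfδ⟩
  | implL hmem h1 h2 ih1 ih2 =>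
      intro M w hw
      rcases ih1 M w hw with ⟨δ, hδ, hfδ⟩
      rcases Finset.mem_insert.1 hδ with rfl | hδ
      · have hb : M.force w _ := hw _ hmem w (M.le_refl w) hfδ
        exact ih2 M w (by intro γ hγ; rcases Finset.mem_insert.1 hγ with rfl | hγ
                          exacts [hb, hw _ hγ])
      · exact ⟨δ, hδ, hfδ⟩
  | @implR Γ Δ a b hmem h1 ih1 =>
      intro M w hw
      refine ⟨_, hmem, ?_⟩
      intro v hv hva
      have hvΓ : ∀ γ ∈ insert a Γ, M.force v γ := by
        intro γ hγ
        rcases Finset.mem_insert.1 hγ with rfl | hγ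
        · exact hva
        · exact force_mono M hv γ (hw _ hγ)
      rcases ih1 M v hvΓ with ⟨δ, hδ, hfδ⟩
      rcases Finset.mem_singleton.1 hδ with rfl
      exact hfδ

end CutAux
namespace CutAux

/-- Subformula closure of a single formula. -/
def subf : PFormula → Finset PFormula
  | .atom p => {.atom p}
  | .bot => {.bot}
  | .disj a b => insert (.disj a b) (subf a ∪ subf b)
  | .conj a b => insert (.conj a b) (subf a ∪ subf b)
  | .impl a b => insert (.impl a b) (subf a ∪ subf b)

lemma mem_subf_self (φ : PFormula) : φ ∈ subf φ := by
  cases φ <;> simp [subf]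

lemma subf_trans : ∀ ψ φ, φ ∈ subf ψ → subf φ ⊆ subf ψ := by
  intro ψ
  induction ψ with
  | atom p => intro φ h; simp [subf] at h; subst h; simp [subf]
  | bot => intro φ h; simp [subf] at h; subst h; simp [subf]
  | disj a b iha ihb =>
      intro φ h
      simp only [subf, Finset.mem_insert, Finset.mem_union] at h
      rcases h with rfl | h | h
      · exact subset_refl _
      · exact (iha φ h).trans (by intro x hx; simp [subf, Finset.mem_union, hx])
      · exact (ihb φ h).trans (by intro x hx; simp [subf, Finset.mem_union, hx])
  | conj a b iha ihb =>
      intro φ h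
      simp only [subf, Finset.mem_insert, Finset.mem_union] at h
      rcases h with rfl | h | h
      · exact subset_refl _
      · exact (iha φ h).trans (by intro x hx; simp [subf, Finset.mem_union, hx])
      · exact (ihb φ h).trans (by intro x hx; simp [subf, Finset.mem_union, hx])
  | impl a b iha ihb =>
      intro φ h
      simp only [subf, Finset.mem_insert, Finset.mem_union] at h
      rcases h with rfl | h | h
      · exact subset_refl _
      · exact (iha φ h).trans (by intro x hx; simp [subf, Finset.mem_union, hx])
      · exact (ihb φ h).trans (by intro x hx; simp [subf, Finset.mem_union, hx])

/-- A set closed under immediate subformulas. -/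
def Closed (S : Finset PFormula) : Prop :=
  (∀ a b : PFormula, a.disj b ∈ S → a ∈ S ∧ b ∈ S) ∧
  (∀ a b : PFormula, a.conj b ∈ S → a ∈ S ∧ b ∈ S) ∧
  (∀ a b : PFormula, a.impl b ∈ S → a ∈ S ∧ b ∈ S)

lemma closed_sup (T : Finset PFormula) : Closed (T.sup subf) := by
  have key : ∀ φ ∈ T.sup subf, subf φ ⊆ T.sup subf := by
    intro φ hφ
    rcases Finset.mem_sup.1 hφ with ⟨ψ, hψ, hφψ⟩
    exact (subf_trans ψ φ hφψ).trans (Finset.le_sup (f := subf) hψ)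
  refine ⟨?_, ?_, ?_⟩ <;> intro a b h <;>
    exact ⟨key _ h (by simp [subf, Finset.mem_union, mem_subf_self]),
           key _ h (by simp [subf, Finset.mem_union, mem_subf_self])⟩

lemma subset_sup_subf (T : Finset PFormula) : T ⊆ T.sup subf := by
  intro φ hφ
  exact Finset.le_sup (f := subf) hφ (mem_subf_self φ)

/-- Saturation of an unprovable sequent. -/
def Saturated (Γ Δ : Finset PFormula) : Prop :=
  (∀ a b : PFormula, a.disj b ∈ Γ → a ∈ Γ ∨ b ∈ Γ) ∧
  (∀ a b : PFormula, a.disj b ∈ Δ → a ∈ Δ ∧ b ∈ Δ) ∧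
  (∀ a b : PFormula, a.conj b ∈ Γ → a ∈ Γ ∧ b ∈ Γ) ∧
  (∀ a b : PFormula, a.conj b ∈ Δ → a ∈ Δ ∨ b ∈ Δ) ∧
  (∀ a b : PFormula, a.impl b ∈ Γ → a ∈ Δ ∨ b ∈ Γ)

end CutAux
namespace CutAux

lemma card_lt_insert {a : PFormula} {S Γ : Finset PFormula}
    (haS : a ∈ S) (haΓ : a ∉ Γ) :
    (S \ insert a Γ).card < (S \ Γ).card := by
  have h1 : a ∈ S \ Γ := Finset.mem_sdiff.2 ⟨haS, haΓ⟩
  rw [Finset.sdiff_insert]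
  exact Finset.card_erase_lt_of_mem h1

lemma card_lt_insert2 {a b : PFormula} {S Γ : Finset PFormula}
    (haS : a ∈ S) (hbS : b ∈ S) (h : a ∉ Γ ∨ b ∉ Γ) :
    (S \ insert a (insert b Γ)).card < (S \ Γ).card := by
  by_cases hb : b ∈ Γ
  · rw [Finset.insert_eq_self.2 hb]
    exact card_lt_insert haS (h.resolve_right (fun h' => h' hb))
  · calc (S \ insert a (insert b Γ)).card
        ≤ (S \ insert b Γ).card :=
          Finset.card_le_card
            (Finset.sdiff_subset_sdiff (subset_refl _) (Finset.subset_insert _ _))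
      _ < (S \ Γ).card := card_lt_insert hbS hb

lemma saturate_aux {S : Finset PFormula} (hS : Closed S) :
    ∀ n Γ Δ, Γ ⊆ S → Δ ⊆ S → (S \ Γ).card + (S \ Δ).card ≤ n → ¬LJpm Γ Δ →
    ∃ Γ' Δ', Γ ⊆ Γ' ∧ Δ ⊆ Δ' ∧ ¬LJpm Γ' Δ' ∧ Saturated Γ' Δ' := by
  intro n
  induction n with
  | zero =>
      intro Γ Δ hΓS hΔS hm hnp
      refine ⟨Γ, Δ, subset_refl _, subset_refl _, hnp, ?_, ?_, ?_, ?_, ?_⟩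
      · intro a b hab
        exact Or.inl (by
          have h0 : (S \ Γ).card = 0 := by omega
          have : S ⊆ Γ := by
            intro x hx
            by_contra hxΓ
            exact absurd (Finset.card_eq_zero.1 h0)
              (Finset.ne_empty_of_mem (Finset.mem_sdiff.2 ⟨hx, hxΓ⟩))
          exact this (hS.1 a b (hΓS hab)).1)
      · intro a b hab
        have h0 : (S \ Δ).card = 0 := by omega
        have hsub : S ⊆ Δ := by
          intro x hx
          by_contra hxΔ
          exact absurd (Finset.card_eq_zero.1 h0)
            (Finset.ne_empty_of_mem (Finset.mem_sdiff.2 ⟨hx, hxΔ⟩))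
        exact ⟨hsub (hS.1 a b (hΔS hab)).1, hsub (hS.1 a b (hΔS hab)).2⟩
      · intro a b hab
        have h0 : (S \ Γ).card = 0 := by omega
        have hsub : S ⊆ Γ := by
          intro x hx
          by_contra hxΓ
          exact absurd (Finset.card_eq_zero.1 h0)
            (Finset.ne_empty_of_mem (Finset.mem_sdiff.2 ⟨hx, hxΓ⟩))
        exact ⟨hsub (hS.2.1 a b (hΓS hab)).1, hsub (hS.2.1 a b (hΓS hab)).2⟩
      · intro a b hab
        have h0 : (S \ Δ).card = 0 := by omega
        have hsub : S ⊆ Δ := by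
          intro x hx
          by_contra hxΔ
          exact absurd (Finset.card_eq_zero.1 h0)
            (Finset.ne_empty_of_mem (Finset.mem_sdiff.2 ⟨hx, hxΔ⟩))
        exact Or.inl (hsub (hS.2.1 a b (hΔS hab)).1)
      · intro a b hab
        have h0 : (S \ Γ).card = 0 := by omega
        have hsub : S ⊆ Γ := by
          intro x hx
          by_contra hxΓ
          exact absurd (Finset.card_eq_zero.1 h0)
            (Finset.ne_empty_of_mem (Finset.mem_sdiff.2 ⟨hx, hxΓ⟩))
        exact Or.inr (hsub (hS.2.2 a b (hΓS hab)).2)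
  | succ n ih =>
      intro Γ Δ hΓS hΔS hm hnp
      by_cases hsat : Saturated Γ Δ
      · exact ⟨Γ, Δ, subset_refl _, subset_refl _, hnp, hsat⟩
      · unfold Saturated at hsat
        push_neg at hsat
        rcases Classical.em (∀ a b : PFormula, a.disj b ∈ Γ → a ∈ Γ ∨ b ∈ Γ) with h1 | h1
        rotate_left
        · -- disjL failure
          push_neg at h1
          obtain ⟨a, b, hab, haΓ, hbΓ⟩ := h1
          have haS : a ∈ S := (hS.1 a b (hΓS hab)).1
          have hbS : b ∈ S := (hS.1 a b (hΓS hab)).2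
          by_cases hp1 : LJpm (insert a Γ) Δ
          · by_cases hp2 : LJpm (insert b Γ) Δ
            · exact absurd (LJpm.disjL hab hp1 hp2) hnp
            · obtain ⟨Γ', Δ', h1', h2', h3', h4'⟩ :=
                ih (insert b Γ) Δ (Finset.insert_subset hbS hΓS) hΔS
                  (by have := card_lt_insert hbS hbΓ; omega) hp2
              exact ⟨Γ', Δ', (Finset.subset_insert _ _).trans h1', h2', h3', h4'⟩
          · obtain ⟨Γ', Δ', h1', h2', h3', h4'⟩ :=
              ih (insert a Γ) Δ (Finset.insert_subset haS hΓS) hΔS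
                (by have := card_lt_insert haS haΓ; omega) hp1
            exact ⟨Γ', Δ', (Finset.subset_insert _ _).trans h1', h2', h3', h4'⟩
        rcases Classical.em (∀ a b : PFormula, a.disj b ∈ Δ → a ∈ Δ ∧ b ∈ Δ) with h2 | h2
        rotate_left
        · -- disjR failure
          push_neg at h2
          obtain ⟨a, b, hab, hfail⟩ := h2
          have haS : a ∈ S := (hS.1 a b (hΔS hab)).1
          have hbS : b ∈ S := (hS.1 a b (hΔS hab)).2
          have hnab : a ∉ Δ ∨ b ∉ Δ := by
            by_cases haΔ : a ∈ Δ
            · exact Or.inr (hfail haΔ)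
            · exact Or.inl haΔ
          have hp : ¬LJpm Γ (insert a (insert b Δ)) :=
            fun hp => hnp (LJpm.disjR hab hp)
          obtain ⟨Γ', Δ', h1', h2', h3', h4'⟩ :=
            ih Γ (insert a (insert b Δ)) hΓS
              (Finset.insert_subset haS (Finset.insert_subset hbS hΔS))
              (by have := card_lt_insert2 haS hbS hnab; omega) hp
          exact ⟨Γ', Δ', h1',
            ((Finset.subset_insert _ _).trans (Finset.subset_insert _ _)).trans h2',
            h3', h4'⟩
        rcases Classical.em (∀ a b : PFormula, a.conj b ∈ Γ → a ∈ Γ ∧ b ∈ Γ) with h3 | h3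
        rotate_left
        · -- conjL failure
          push_neg at h3
          obtain ⟨a, b, hab, hfail⟩ := h3
          have haS : a ∈ S := (hS.2.1 a b (hΓS hab)).1
          have hbS : b ∈ S := (hS.2.1 a b (hΓS hab)).2
          have hnab : a ∉ Γ ∨ b ∉ Γ := by
            by_cases haΓ : a ∈ Γ
            · exact Or.inr (hfail haΓ)
            · exact Or.inl haΓ
          have hp : ¬LJpm (insert a (insert b Γ)) Δ :=
            fun hp => hnp (LJpm.conjL hab hp)
          obtain ⟨Γ', Δ', h1', h2', h3', h4'⟩ :=
            ih (insert a (insert b Γ)) Δ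
              (Finset.insert_subset haS (Finset.insert_subset hbS hΓS)) hΔS
              (by have := card_lt_insert2 haS hbS hnab; omega) hp
          exact ⟨Γ', Δ',
            ((Finset.subset_insert _ _).trans (Finset.subset_insert _ _)).trans h1',
            h2', h3', h4'⟩
        rcases Classical.em (∀ a b : PFormula, a.conj b ∈ Δ → a ∈ Δ ∨ b ∈ Δ) with h4 | h4
        rotate_left
        · -- conjR failure
          push_neg at h4
          obtain ⟨a, b, hab, haΔ, hbΔ⟩ := h4
          have haS : a ∈ S := (hS.2.1 a b (hΔS hab)).1
          have hbS : b ∈ S := (hS.2.1 a b (hΔS hab)).2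
          by_cases hp1 : LJpm Γ (insert a Δ)
          · by_cases hp2 : LJpm Γ (insert b Δ)
            · exact absurd (LJpm.conjR hab hp1 hp2) hnp
            · obtain ⟨Γ', Δ', h1', h2', h3', h4'⟩ :=
                ih Γ (insert b Δ) hΓS (Finset.insert_subset hbS hΔS)
                  (by have := card_lt_insert hbS hbΔ; omega) hp2
              exact ⟨Γ', Δ', h1', (Finset.subset_insert _ _).trans h2', h3', h4'⟩
          · obtain ⟨Γ', Δ', h1', h2', h3', h4'⟩ :=
              ih Γ (insert a Δ) hΓS (Finset.insert_subset haS hΔS)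
                (by have := card_lt_insert haS haΔ; omega) hp1
            exact ⟨Γ', Δ', h1', (Finset.subset_insert _ _).trans h2', h3', h4'⟩
        -- implL failure (must be this one since not saturated)
        · have h5 := hsat h1 h2 h3 h4
          obtain ⟨a, b, hab, haΔ, hbΓ⟩ := h5
          have haS : a ∈ S := (hS.2.2 a b (hΓS hab)).1
          have hbS : b ∈ S := (hS.2.2 a b (hΓS hab)).2
          by_cases hp1 : LJpm Γ (insert a Δ)
          · by_cases hp2 : LJpm (insert b Γ) Δ
            · exact absurd (LJpm.implL hab hp1 hp2) hnp
            · obtain ⟨Γ', Δ', h1', h2', h3', h4'⟩ :=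
                ih (insert b Γ) Δ (Finset.insert_subset hbS hΓS) hΔS
                  (by have := card_lt_insert hbS hbΓ; omega) hp2
              exact ⟨Γ', Δ', (Finset.subset_insert _ _).trans h1', h2', h3', h4'⟩
          · obtain ⟨Γ', Δ', h1', h2', h3', h4'⟩ :=
              ih Γ (insert a Δ) hΓS (Finset.insert_subset haS hΔS)
                (by have := card_lt_insert haS haΔ; omega) hp1
            exact ⟨Γ', Δ', h1', (Finset.subset_insert _ _).trans h2', h3', h4'⟩

lemma saturate {Γ Δ : Finset PFormula} (hnp : ¬LJpm Γ Δ) :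
    ∃ Γ' Δ', Γ ⊆ Γ' ∧ Δ ⊆ Δ' ∧ ¬LJpm Γ' Δ' ∧ Saturated Γ' Δ' := by
  set S := (Γ ∪ Δ).sup subf with hSdef
  have hΓS : Γ ⊆ S := (Finset.subset_union_left.trans (subset_sup_subf _))
  have hΔS : Δ ⊆ S := (Finset.subset_union_right.trans (subset_sup_subf _))
  exact saturate_aux (closed_sup _) ((S \ Γ).card + (S \ Δ).card) Γ Δ hΓS hΔS le_rfl hnp

end CutAux
namespace CutAux

lemma empty_not_provable : ¬LJpm (∅ : Finset PFormula) ∅ := by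
  intro h
  have hv := soundness h
  obtain ⟨δ, hδ, _⟩ := hv
    { W := Unit, ne := ⟨()⟩, le := fun _ _ => True,
      le_refl := fun _ => trivial, le_trans := fun _ _ => trivial,
      V := fun _ => ∅, V_mono := fun _ => subset_refl _ } ()
    (by intro γ hγ; exact absurd hγ (Finset.notMem_empty _))
  exact absurd hδ (Finset.notMem_empty _)

def World : Type :=
  {p : Finset PFormula × Finset PFormula // ¬LJpm p.1 p.2 ∧ Saturated p.1 p.2}

def canonical : KripkeModel where
  W := World
  ne := ⟨⟨(∅, ∅), empty_not_provable, by
    refine ⟨?_, ?_, ?_, ?_, ?_⟩ <;> intro a b h <;>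
      exact absurd h (Finset.notMem_empty _)⟩⟩
  le w v := w.1.1 ⊆ v.1.1
  le_refl w := subset_refl _
  le_trans h1 h2 := h1.trans h2
  V w := {p | PFormula.atom p ∈ w.1.1}
  V_mono h p hp := h hp

lemma canonical_force (φ : PFormula) :
    ∀ w : canonical.W,
      (φ ∈ w.1.1 → canonical.force w φ) ∧ (φ ∈ w.1.2 → ¬canonical.force w φ) := by
  induction φ with
  | atom p =>
      intro w
      constructor
      · intro h; exact h
      · intro h hf
        exact w.2.1 (LJpm.axAtom (hf : PFormula.atom p ∈ w.1.1) h)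
  | bot =>
      intro w
      exact ⟨fun h => absurd (LJpm.axBot h) w.2.1, fun _ hf => hf⟩
  | disj a b iha ihb =>
      intro w
      constructor
      · intro h
        rcases w.2.2.1 a b h with ha | hb
        · exact Or.inl ((iha w).1 ha)
        · exact Or.inr ((ihb w).1 hb)
      · intro h hf
        obtain ⟨ha, hb⟩ := w.2.2.2.1 a b h
        rcases hf with hf | hf
        · exact (iha w).2 ha hf
        · exact (ihb w).2 hb hf
  | conj a b iha ihb =>
      intro w
      constructor
      · intro h
        obtain ⟨ha, hb⟩ := w.2.2.2.2.1 a b h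
        exact ⟨(iha w).1 ha, (ihb w).1 hb⟩
      · intro h hf
        rcases w.2.2.2.2.2.1 a b h with ha | hb
        · exact (iha w).2 ha hf.1
        · exact (ihb w).2 hb hf.2
  | impl a b iha ihb =>
      intro w
      constructor
      · intro h v hwv hva
        have hmem : a.impl b ∈ v.1.1 := hwv h
        rcases v.2.2.2.2.2.2 a b hmem with ha | hb
        · exact absurd hva ((iha v).2 ha)
        · exact (ihb v).1 hb
      · intro h hf
        have hnp : ¬LJpm (insert a w.1.1) {b} :=
          fun hp => w.2.1 (LJpm.implR h hp)
        obtain ⟨Γ', Δ', h1, h2, h3, h4⟩ := saturate hnp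
        set v : canonical.W := ⟨(Γ', Δ'), h3, h4⟩ with hv
        have hwv : canonical.le w v := (Finset.subset_insert _ _).trans h1
        have hva : canonical.force v a := (iha v).1 (h1 (Finset.mem_insert_self _ _))
        have hvb := hf v hwv hva
        exact (ihb v).2 (h2 (Finset.mem_singleton_self _)) hvb

lemma completeness {Γ Δ : Finset PFormula} (h : Valid Γ Δ) : LJpm Γ Δ := by
  by_contra hnp
  obtain ⟨Γ', Δ', h1, h2, h3, h4⟩ := saturate hnp
  set w : canonical.W := ⟨(Γ', Δ'), h3, h4⟩ with hw
  obtain ⟨δ, hδ, hfδ⟩ := h canonical w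
    (fun γ hγ => (canonical_force γ w).1 (h1 hγ))
  exact (canonical_force δ w).2 (h2 hδ) hfδ

end CutAux

/-- the cut rule is admissible in cut-free LJpm. -/
theorem LJpm_cut_admissible {Γ Δ : Finset PFormula} {α : PFormula}
    (h₁ : LJpm Γ (insert α Δ)) (h₂ : LJpm (insert α Γ) Δ) : LJpm Γ Δ := by
  apply CutAux.completeness
  intro M w hw
  rcases CutAux.soundness h₁ M w hw with ⟨δ, hδ, hfδ⟩
  rcases Finset.mem_insert.1 hδ with rfl | hδ
  · exact CutAux.soundness h₂ M w (by
      intro γ hγ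
      rcases Finset.mem_insert.1 hγ with rfl | hγ
      exacts [hfδ, hw _ hγ])
  · exact ⟨δ, hδ, hfδ⟩
end

section
/- The calculus LJm+(cut) is complete for first-order Kripke semantics: every sequent valid in all first-order Kripke models is derivable in LJm with cut. -/
open FirstOrder

universe u v

/-- Formulas of intuitionistic predicate logic over a first-order language `L`,
with free variables of type `α`; quantifiers bind a fresh variable (`Option`). -/
inductive IFormula (L : FirstOrder.Language.{u, v}) : Type → Type (max u v + 1)
  | falsum {α : Type} : IFormula L α
  | rel {α : Type} {l : ℕ} (R : L.Relations l) (ts : Fin l → L.Term α) : IFormula L α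
  | disj {α : Type} : IFormula L α → IFormula L α → IFormula L α
  | conj {α : Type} : IFormula L α → IFormula L α → IFormula L α
  | impl {α : Type} : IFormula L α → IFormula L α → IFormula L α
  | ex {α : Type} : IFormula L (Option α) → IFormula L α
  | all {α : Type} : IFormula L (Option α) → IFormula L α

variable {L : FirstOrder.Language.{u, v}}

/-- Renaming of free variables. -/
def IFormula.relabel : ∀ {α β : Type}, (α → β) → IFormula L α → IFormula L β
  | _, _, _, .falsum => .falsum
  | _, _, f, .rel R ts => .rel R (fun i => (ts i).relabel f)
  | _, _, f, .disj a b => .disj (a.relabel f) (b.relabel f)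
  | _, _, f, .conj a b => .conj (a.relabel f) (b.relabel f)
  | _, _, f, .impl a b => .impl (a.relabel f) (b.relabel f)
  | _, _, f, .ex φ => .ex (φ.relabel (Option.map f))
  | _, _, f, .all φ => .all (φ.relabel (Option.map f))

/-- Simultaneous substitution of terms for free variables (capture cannot occur
since substituted terms contain no bound variables). -/
def IFormula.substF : ∀ {α β : Type}, IFormula L α → (α → L.Term β) → IFormula L β
  | _, _, .falsum, _ => .falsum
  | _, _, .rel R ts, σ => .rel R (fun i => (ts i).subst σ)
  | _, _, .disj a b, σ => .disj (a.substF σ) (b.substF σ)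
  | _, _, .conj a b, σ => .conj (a.substF σ) (b.substF σ)
  | _, _, .impl a b, σ => .impl (a.substF σ) (b.substF σ)
  | _, _, .ex φ, σ => .ex (φ.substF (fun o =>
      Option.elim o (Language.Term.var none) (fun a => (σ a).relabel some)))
  | _, _, .all φ, σ => .all (φ.substF (fun o =>
      Option.elim o (Language.Term.var none) (fun a => (σ a).relabel some)))

/-- Instantiation `α(t)` of the body of a quantifier by a term `t`. -/
def openF (φ : IFormula L (Option ℕ)) (t : L.Term ℕ) : IFormula L ℕ :=
  φ.substF (fun o => Option.elim o t Language.Term.var)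

/-- Free variables of a term. -/
def tmFv {α : Type} : L.Term α → Set α
  | .var a => {a}
  | .func _ ts => ⋃ i, tmFv (ts i)

/-- Free variables of a formula. -/
def fvF : ∀ {α : Type}, IFormula L α → Set α
  | _, .falsum => ∅
  | _, .rel _ ts => ⋃ i, tmFv (ts i)
  | _, .disj a b => fvF a ∪ fvF b
  | _, .conj a b => fvF a ∪ fvF b
  | _, .impl a b => fvF a ∪ fvF b
  | _, .ex φ => {a | some a ∈ fvF φ}
  | _, .all φ => {a | some a ∈ fvF φ}

/-- A Kripke model for a first-order language: a quasi-order of worlds with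
expanding nonempty domains D(σ) ⊆ X and monotone interpretations of relation
and function symbols. -/
structure FKModel (L : FirstOrder.Language.{u, v}) where
  W : Type
  ne : Nonempty W
  X : Type
  le : W → W → Prop
  le_refl : ∀ w, le w w
  le_trans : ∀ {a b c}, le a b → le b c → le a c
  D : W → Set X
  D_ne : ∀ w, (D w).Nonempty
  D_mono : ∀ {a b}, le a b → D a ⊆ D b
  funMap : ∀ {n : ℕ}, W → L.Functions n → (Fin n → X) → X
  funMap_mem : ∀ {n : ℕ} (w : W) (f : L.Functions n) (xs : Fin n → X),
    (∀ i, xs i ∈ D w) → funMap w f xs ∈ D w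
  funMap_mono : ∀ {n : ℕ} {a b : W} (f : L.Functions n) (xs : Fin n → X),
    le a b → (∀ i, xs i ∈ D a) → funMap a f xs = funMap b f xs
  RelMap : ∀ {n : ℕ}, W → L.Relations n → (Fin n → X) → Prop
  RelMap_dom : ∀ {n : ℕ} (w : W) (R : L.Relations n) (xs : Fin n → X),
    RelMap w R xs → ∀ i, xs i ∈ D w
  RelMap_mono : ∀ {n : ℕ} {a b : W} (R : L.Relations n) (xs : Fin n → X),
    le a b → RelMap a R xs → RelMap b R xs

/-- Value of a term at a world under an assignment. -/
def FKModel.tval (M : FKModel L) (w : M.W) {α : Type} (vv : α → M.X) :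
    L.Term α → M.X
  | .var a => vv a
  | .func f ts => M.funMap w f (fun i => M.tval w vv (ts i))

/-- Kripke forcing of a formula at a world under an assignment. -/
def FKModel.Force (M : FKModel L) : ∀ {α : Type}, M.W → (α → M.X) → IFormula L α → Prop
  | _, _, _, .falsum => False
  | _, w, vv, .rel R ts => M.RelMap w R (fun i => M.tval w vv (ts i))
  | _, w, vv, .disj a b => M.Force w vv a ∨ M.Force w vv b
  | _, w, vv, .conj a b => M.Force w vv a ∧ M.Force w vv b
  | _, w, vv, .impl a b => ∀ u, M.le w u → M.Force u vv a → M.Force u vv b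
  | _, w, vv, .ex φ => ∃ c ∈ M.D w, M.Force w (fun o => Option.elim o c vv) φ
  | _, w, vv, .all φ => ∀ u, M.le w u → ∀ c ∈ M.D u,
      M.Force u (fun o => Option.elim o c vv) φ

noncomputable instance {α : Type} : DecidableEq (IFormula L α) :=
  fun _ _ => Classical.dec _

/-- The multi-succedent sequent calculus LJm for intuitionistic predicate
logic (sequents are finite sets of formulas with free variables in ℕ);
when `cut = true` the cut rule is also available (LJm+(cut)). -/
inductive LJm (L : FirstOrder.Language.{u, v}) (cut : Bool) :
    Finset (IFormula L ℕ) → Finset (IFormula L ℕ) → Prop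
  | axAtom {Γ Δ} {l : ℕ} {R : L.Relations l} {ts : Fin l → L.Term ℕ} :
      IFormula.rel R ts ∈ Γ → IFormula.rel R ts ∈ Δ → LJm L cut Γ Δ
  | axBot {Γ Δ} : IFormula.falsum ∈ Γ → LJm L cut Γ Δ
  | disjL {Γ Δ} {a b : IFormula L ℕ} : a.disj b ∈ Γ →
      LJm L cut (insert a Γ) Δ → LJm L cut (insert b Γ) Δ → LJm L cut Γ Δ
  | disjR {Γ Δ} {a b : IFormula L ℕ} : a.disj b ∈ Δ →
      LJm L cut Γ (insert a (insert b Δ)) → LJm L cut Γ Δ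
  | conjL {Γ Δ} {a b : IFormula L ℕ} : a.conj b ∈ Γ →
      LJm L cut (insert a (insert b Γ)) Δ → LJm L cut Γ Δ
  | conjR {Γ Δ} {a b : IFormula L ℕ} : a.conj b ∈ Δ →
      LJm L cut Γ (insert a Δ) → LJm L cut Γ (insert b Δ) → LJm L cut Γ Δ
  | implL {Γ Δ} {a b : IFormula L ℕ} : a.impl b ∈ Γ →
      LJm L cut Γ (insert a Δ) → LJm L cut (insert b Γ) Δ → LJm L cut Γ Δ
  | implR {Γ Δ} {a b : IFormula L ℕ} : a.impl b ∈ Δ →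
      LJm L cut (insert a Γ) {b} → LJm L cut Γ Δ
  | exL {Γ Δ} {φ : IFormula L (Option ℕ)} {a : ℕ} : IFormula.ex φ ∈ Γ →
      (∀ ψ ∈ Γ, a ∉ fvF ψ) → (∀ ψ ∈ Δ, a ∉ fvF ψ) →
      LJm L cut (insert (openF φ (Language.Term.var a)) Γ) Δ → LJm L cut Γ Δ
  | exR {Γ Δ} {φ : IFormula L (Option ℕ)} (t : L.Term ℕ) : IFormula.ex φ ∈ Δ →
      LJm L cut Γ (insert (openF φ t) Δ) → LJm L cut Γ Δ
  | allL {Γ Δ} {φ : IFormula L (Option ℕ)} (t : L.Term ℕ) : IFormula.all φ ∈ Γ →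
      LJm L cut (insert (openF φ t) Γ) Δ → LJm L cut Γ Δ
  | allR {Γ Δ} {φ : IFormula L (Option ℕ)} {a : ℕ} : IFormula.all φ ∈ Δ →
      (∀ ψ ∈ Γ, a ∉ fvF ψ) → (∀ ψ ∈ Δ, a ∉ fvF ψ) →
      LJm L cut Γ {openF φ (Language.Term.var a)} → LJm L cut Γ Δ
  | cutRule {Γ Δ} {α : IFormula L ℕ} : cut = true →
      LJm L cut Γ (insert α Δ) → LJm L cut (insert α Γ) Δ → LJm L cut Γ Δ

/-- Validity of a sequent in all first-order Kripke models, under every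
assignment of the free variables into the domain of the world. -/
def FOValid (L : FirstOrder.Language.{u, v})
    (Γ Δ : Finset (IFormula L ℕ)) : Prop :=
  ∀ (M : FKModel L) (w : M.W) (vv : ℕ → M.X), (∀ n, vv n ∈ M.D w) →
    (∀ γ ∈ Γ, M.Force w vv γ) → ∃ δ ∈ Δ, M.Force w vv δ

open FirstOrder Language

namespace Compl

variable {L : FirstOrder.Language.{u, v}}

/-! ### Term lemmas -/

theorem tm_subst_var {α : Type} (t : L.Term α) : t.subst Term.var = t := by
  induction t with
  | var a => rfl
  | func f ts ih => simp only [Term.subst]; exact congrArg _ (funext fun i => ih i)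

theorem tm_subst_subst {α β γ : Type} (t : L.Term α) (σ : α → L.Term β) (τ : β → L.Term γ) :
    (t.subst σ).subst τ = t.subst (fun a => (σ a).subst τ) := by
  induction t with
  | var a => rfl
  | func f ts ih => simp only [Term.subst]; exact congrArg _ (funext fun i => ih i)

theorem tm_relabel_eq_subst {α β : Type} (f : α → β) (t : L.Term α) :
    t.relabel f = t.subst (fun a => Term.var (f a)) := by
  induction t with
  | var a => rfl
  | func g ts ih => simp only [Term.relabel, Term.subst]; exact congrArg _ (funext fun i => ih i)

theorem tm_subst_congr {α β : Type} (t : L.Term α) {σ τ : α → L.Term β}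
    (h : ∀ a ∈ tmFv t, σ a = τ a) : t.subst σ = t.subst τ := by
  induction t with
  | var a => exact h a rfl
  | func g ts ih =>
    simp only [Term.subst]
    exact congrArg _ (funext fun i => ih i fun a ha => h a (Set.mem_iUnion.2 ⟨i, ha⟩))

theorem tmFv_subst {α β : Type} (t : L.Term α) (σ : α → L.Term β) :
    tmFv (t.subst σ) = ⋃ a ∈ tmFv t, tmFv (σ a) := by
  induction t with
  | var a => simp [tmFv, Term.subst]
  | func g ts ih =>
    simp only [Term.subst, tmFv]
    ext b
    simp only [Set.mem_iUnion]
    constructor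
    · rintro ⟨i, hb⟩
      rw [ih i] at hb
      simp only [Set.mem_iUnion] at hb
      obtain ⟨a, ha, hb⟩ := hb
      exact ⟨a, ⟨i, ha⟩, hb⟩
    · rintro ⟨a, ⟨i, hi⟩, hb⟩
      refine ⟨i, ?_⟩
      rw [ih i]
      simp only [Set.mem_iUnion]
      exact ⟨a, hi, hb⟩

theorem tmFv_finite {α : Type} (t : L.Term α) : (tmFv t).Finite := by
  induction t with
  | var a => simp only [tmFv]; exact Set.finite_singleton a
  | func g ts ih => exact Set.finite_iUnion ih

/-- the canonical lifting of a substitution under a binder -/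
def sLift {α β : Type} (σ : α → L.Term β) : Option α → L.Term (Option β) :=
  fun o => Option.elim o (Term.var none) (fun a => (σ a).relabel some)

theorem substF_ex {α β : Type} (φ : IFormula L (Option α)) (σ : α → L.Term β) :
    (IFormula.ex φ).substF σ = IFormula.ex (φ.substF (sLift σ)) := rfl

theorem substF_all {α β : Type} (φ : IFormula L (Option α)) (σ : α → L.Term β) :
    (IFormula.all φ).substF σ = IFormula.all (φ.substF (sLift σ)) := rfl

/-! ### Formula lemmas -/

theorem substF_congr : ∀ {α : Type} (φ : IFormula L α) {β : Type} {σ τ : α → L.Term β},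
    (∀ a ∈ fvF φ, σ a = τ a) → φ.substF σ = φ.substF τ := by
  intro α φ
  induction φ with
  | falsum => intro β σ τ h; rfl
  | rel R ts =>
    intro β σ τ h
    simp only [IFormula.substF]
    exact congrArg _ (funext fun i => tm_subst_congr _ fun a ha => h a (Set.mem_iUnion.2 ⟨i, ha⟩))
  | disj a b iha ihb =>
    intro β σ τ h
    simp only [IFormula.substF]
    rw [iha fun x hx => h x (Or.inl hx), ihb fun x hx => h x (Or.inr hx)]
  | conj a b iha ihb =>
    intro β σ τ h
    simp only [IFormula.substF]
    rw [iha fun x hx => h x (Or.inl hx), ihb fun x hx => h x (Or.inr hx)]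
  | impl a b iha ihb =>
    intro β σ τ h
    simp only [IFormula.substF]
    rw [iha fun x hx => h x (Or.inl hx), ihb fun x hx => h x (Or.inr hx)]
  | ex φ ih =>
    intro β σ τ h
    rw [substF_ex, substF_ex]
    congr 1
    apply ih
    rintro (_ | a) ha
    · rfl
    · simp only [sLift, Option.elim]
      rw [h a ha]
  | all φ ih =>
    intro β σ τ h
    rw [substF_all, substF_all]
    congr 1
    apply ih
    rintro (_ | a) ha
    · rfl
    · simp only [sLift, Option.elim]
      rw [h a ha]

theorem substF_substF : ∀ {α : Type} (φ : IFormula L α) {β γ : Type} (σ : α → L.Term β)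
    (τ : β → L.Term γ), (φ.substF σ).substF τ = φ.substF (fun a => (σ a).subst τ) := by
  intro α φ
  induction φ with
  | falsum => intro β γ σ τ; rfl
  | rel R ts =>
    intro β γ σ τ
    simp only [IFormula.substF]
    exact congrArg _ (funext fun i => tm_subst_subst _ _ _)
  | disj a b iha ihb => intro β γ σ τ; simp only [IFormula.substF]; rw [iha, ihb]
  | conj a b iha ihb => intro β γ σ τ; simp only [IFormula.substF]; rw [iha, ihb]
  | impl a b iha ihb => intro β γ σ τ; simp only [IFormula.substF]; rw [iha, ihb]
  | ex φ ih =>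
    intro β γ σ τ
    rw [substF_ex, substF_ex, substF_ex, ih]
    congr 1
    apply substF_congr
    rintro (_ | a) _
    · rfl
    · show ((σ a).relabel some).subst (sLift τ) = ((σ a).subst τ).relabel some
      rw [tm_relabel_eq_subst, tm_subst_subst, tm_relabel_eq_subst, tm_subst_subst]
      exact tm_subst_congr _ fun x _ => tm_relabel_eq_subst _ _
  | all φ ih =>
    intro β γ σ τ
    rw [substF_all, substF_all, substF_all, ih]
    congr 1
    apply substF_congr
    rintro (_ | a) _
    · rfl
    · show ((σ a).relabel some).subst (sLift τ) = ((σ a).subst τ).relabel some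
      rw [tm_relabel_eq_subst, tm_subst_subst, tm_relabel_eq_subst, tm_subst_subst]
      exact tm_subst_congr _ fun x _ => tm_relabel_eq_subst _ _

theorem substF_var : ∀ {α : Type} (φ : IFormula L α), φ.substF Term.var = φ := by
  intro α φ
  induction φ with
  | falsum => rfl
  | rel R ts => simp only [IFormula.substF]; exact congrArg _ (funext fun i => tm_subst_var _)
  | disj a b iha ihb => simp only [IFormula.substF]; rw [iha, ihb]
  | conj a b iha ihb => simp only [IFormula.substF]; rw [iha, ihb]
  | impl a b iha ihb => simp only [IFormula.substF]; rw [iha, ihb]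
  | ex φ ih =>
    rw [substF_ex]
    have h2 : φ.substF (sLift Term.var) = φ.substF Term.var :=
      substF_congr φ (fun o _ => by cases o <;> rfl)
    rw [h2, ih]
  | all φ ih =>
    rw [substF_all]
    have h2 : φ.substF (sLift Term.var) = φ.substF Term.var :=
      substF_congr φ (fun o _ => by cases o <;> rfl)
    rw [h2, ih]

theorem relabel_eq_substF : ∀ {α : Type} (φ : IFormula L α) {β : Type} (f : α → β),
    φ.relabel f = φ.substF (fun a => Term.var (f a)) := by
  intro α φ
  induction φ with
  | falsum => intro β f; rfl
  | rel R ts =>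
    intro β f
    simp only [IFormula.relabel, IFormula.substF]
    exact congrArg _ (funext fun i => tm_relabel_eq_subst _ _)
  | disj a b iha ihb => intro β f; simp only [IFormula.relabel, IFormula.substF]; rw [iha, ihb]
  | conj a b iha ihb => intro β f; simp only [IFormula.relabel, IFormula.substF]; rw [iha, ihb]
  | impl a b iha ihb => intro β f; simp only [IFormula.relabel, IFormula.substF]; rw [iha, ihb]
  | ex φ ih =>
    intro β f
    simp only [IFormula.relabel]
    rw [substF_ex, ih]
    congr 1
    apply substF_congr
    rintro (_ | a) _ <;> rfl
  | all φ ih =>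
    intro β f
    simp only [IFormula.relabel]
    rw [substF_all, ih]
    congr 1
    apply substF_congr
    rintro (_ | a) _ <;> rfl

theorem fvF_substF : ∀ {α : Type} (φ : IFormula L α) {β : Type} (σ : α → L.Term β),
    fvF (φ.substF σ) = ⋃ a ∈ fvF φ, tmFv (σ a) := by
  intro α φ
  induction φ with
  | falsum => intro β σ; simp [IFormula.substF, fvF]
  | rel R ts =>
    intro β σ
    simp only [IFormula.substF, fvF]
    simp only [tmFv_subst]
    exact (Set.biUnion_iUnion _ _).symm
  | disj a b iha ihb =>
    intro β σ
    simp only [IFormula.substF, fvF]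
    rw [iha, ihb]
    exact (Set.biUnion_union _ _ _).symm
  | conj a b iha ihb =>
    intro β σ
    simp only [IFormula.substF, fvF]
    rw [iha, ihb]
    exact (Set.biUnion_union _ _ _).symm
  | impl a b iha ihb =>
    intro β σ
    simp only [IFormula.substF, fvF]
    rw [iha, ihb]
    exact (Set.biUnion_union _ _ _).symm
  | ex φ ih =>
    intro β σ
    rw [substF_ex]
    show {b | some b ∈ fvF (φ.substF (sLift σ))} = _
    rw [ih]
    ext b
    simp only [Set.mem_setOf_eq, Set.mem_iUnion]
    constructor
    · rintro ⟨o, ho, hb⟩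
      match o with
      | none => simp [sLift, tmFv] at hb
      | some a =>
        refine ⟨a, ho, ?_⟩
        simp only [sLift, Option.elim, tm_relabel_eq_subst, tmFv_subst] at hb
        simp only [Set.mem_iUnion] at hb
        obtain ⟨x, hx, hb⟩ := hb
        simp only [tmFv, Set.mem_singleton_iff] at hb
        cases hb; exact hx
    · rintro ⟨a, ha, hb⟩
      refine ⟨some a, ha, ?_⟩
      simp only [sLift, Option.elim, tm_relabel_eq_subst, tmFv_subst]
      simp only [Set.mem_iUnion]
      exact ⟨b, hb, by simp [tmFv]⟩
  | all φ ih =>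
    intro β σ
    rw [substF_all]
    show {b | some b ∈ fvF (φ.substF (sLift σ))} = _
    rw [ih]
    ext b
    simp only [Set.mem_setOf_eq, Set.mem_iUnion]
    constructor
    · rintro ⟨o, ho, hb⟩
      match o with
      | none => simp [sLift, tmFv] at hb
      | some a =>
        refine ⟨a, ho, ?_⟩
        simp only [sLift, Option.elim, tm_relabel_eq_subst, tmFv_subst] at hb
        simp only [Set.mem_iUnion] at hb
        obtain ⟨x, hx, hb⟩ := hb
        simp only [tmFv, Set.mem_singleton_iff] at hb
        cases hb; exact hx
    · rintro ⟨a, ha, hb⟩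
      refine ⟨some a, ha, ?_⟩
      simp only [sLift, Option.elim, tm_relabel_eq_subst, tmFv_subst]
      simp only [Set.mem_iUnion]
      exact ⟨b, hb, by simp [tmFv]⟩

theorem fvF_finite : ∀ {α : Type} (φ : IFormula L α), (fvF φ).Finite := by
  intro α φ
  induction φ with
  | falsum => exact Set.finite_empty
  | rel R ts => exact Set.finite_iUnion fun i => tmFv_finite _
  | disj a b iha ihb => exact iha.union ihb
  | conj a b iha ihb => exact iha.union ihb
  | impl a b iha ihb => exact iha.union ihb
  | ex φ ih =>
    show {a | some a ∈ fvF φ}.Finite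
    have : {a | some a ∈ fvF φ} = some ⁻¹' fvF φ := rfl
    rw [this]
    exact ih.preimage (Set.injOn_of_injective (Option.some_injective _))
  | all φ ih =>
    show {a | some a ∈ fvF φ}.Finite
    have : {a | some a ∈ fvF φ} = some ⁻¹' fvF φ := rfl
    rw [this]
    exact ih.preimage (Set.injOn_of_injective (Option.some_injective _))

end Compl

namespace Compl
variable {L : FirstOrder.Language.{u, v}}
open FirstOrder Language

theorem relabel_comp {α β γ : Type} (φ : IFormula L α) (f : α → β) (g : β → γ) :
    (φ.relabel f).relabel g = φ.relabel (g ∘ f) := by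
  rw [relabel_eq_substF, relabel_eq_substF, relabel_eq_substF, substF_substF]
  rfl

theorem relabel_congr {α β : Type} (φ : IFormula L α) {f g : α → β}
    (h : ∀ a ∈ fvF φ, f a = g a) : φ.relabel f = φ.relabel g := by
  rw [relabel_eq_substF, relabel_eq_substF]
  exact substF_congr φ fun a ha => by rw [h a ha]

theorem relabel_id {α : Type} (φ : IFormula L α) : φ.relabel id = φ := by
  rw [relabel_eq_substF]; exact substF_var φ

theorem fvF_relabel {α β : Type} (φ : IFormula L α) (f : α → β) :
    fvF (φ.relabel f) = f '' fvF φ := by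
  rw [relabel_eq_substF, fvF_substF]
  ext b
  simp only [Set.mem_iUnion, Set.mem_image, tmFv, Set.mem_singleton_iff]
  constructor
  · rintro ⟨a, ha, rfl⟩; exact ⟨a, ha, rfl⟩
  · rintro ⟨a, ha, rfl⟩; exact ⟨a, ha, rfl⟩

theorem openF_substF (φ : IFormula L (Option ℕ)) (t : L.Term ℕ) (σ : ℕ → L.Term ℕ) :
    (openF φ t).substF σ = openF (φ.substF (sLift σ)) (t.subst σ) := by
  unfold openF
  rw [substF_substF, substF_substF]
  apply substF_congr
  rintro (_ | a) _
  · rfl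
  · show σ a = ((σ a).relabel some).subst _
    rw [tm_relabel_eq_subst, tm_subst_subst]
    exact (tm_subst_var _).symm.trans (tm_subst_congr _ fun x _ => rfl)

theorem sLift_var {α β : Type} (ρ : α → β) :
    sLift (L := L) (fun a => Term.var (ρ a)) = fun o => Term.var (Option.map ρ o) := by
  funext o; cases o <;> rfl

theorem relabel_openF (φ : IFormula L (Option ℕ)) (t : L.Term ℕ) (ρ : ℕ → ℕ) :
    (openF φ t).relabel ρ = openF (φ.relabel (Option.map ρ)) (t.relabel ρ) := by
  rw [relabel_eq_substF, openF_substF, sLift_var, ← relabel_eq_substF, ← tm_relabel_eq_subst]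

theorem openF_substF_lift {α : Type} (φ : IFormula L (Option α)) (σ : α → L.Term ℕ)
    (s : L.Term ℕ) :
    openF (φ.substF (sLift σ)) s = φ.substF (fun o => Option.elim o s σ) := by
  unfold openF
  rw [substF_substF]
  apply substF_congr
  rintro (_ | a) _
  · rfl
  · show ((σ a).relabel some).subst _ = σ a
    rw [tm_relabel_eq_subst, tm_subst_subst]
    exact (tm_subst_congr _ fun x _ => rfl).trans (tm_subst_var _)

theorem fvF_openF (φ : IFormula L (Option ℕ)) (t : L.Term ℕ) :
    fvF (openF φ t) ⊆ tmFv t ∪ fvF (IFormula.ex φ) := by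
  unfold openF
  rw [fvF_substF]
  rintro b hb
  simp only [Set.mem_iUnion] at hb
  obtain ⟨o, ho, hb⟩ := hb
  match o with
  | none => exact Or.inl hb
  | some a =>
    replace hb : b = a := hb
    subst hb
    exact Or.inr ho

/-- the set of free variables of a finite set of formulas -/
def fvS (S : Finset (IFormula L ℕ)) : Set ℕ := ⋃ ψ ∈ (S : Set (IFormula L ℕ)), fvF ψ

theorem fvS_finite (S : Finset (IFormula L ℕ)) : (fvS S).Finite :=
  Set.Finite.biUnion S.finite_toSet fun ψ _ => fvF_finite ψ

theorem exists_fresh (s : Set ℕ) (hs : s.Finite) : ∃ b, b ∉ s :=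
  hs.infinite_compl.nonempty

theorem not_mem_fvS {S : Finset (IFormula L ℕ)} {b : ℕ} (h : b ∉ fvS S) :
    ∀ ψ ∈ S, b ∉ fvF ψ := by
  intro ψ hψ hb
  exact h (Set.mem_biUnion hψ hb)

/-- renaming by a permutation -/
def rn (π : Equiv.Perm ℕ) (φ : IFormula L ℕ) : IFormula L ℕ := φ.relabel π

theorem fvF_rn (π : Equiv.Perm ℕ) (φ : IFormula L ℕ) : fvF (rn π φ) = π '' fvF φ :=
  fvF_relabel φ π

theorem rn_congr_of_agree {π π' : Equiv.Perm ℕ} (φ : IFormula L ℕ)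
    (h : ∀ a ∈ fvF φ, π a = π' a) : rn π φ = rn π' φ := relabel_congr φ h

/-- The combined renaming-weakening theorem. -/
theorem renWeak {c : Bool} {Γ Δ : Finset (IFormula L ℕ)} (d : LJm L c Γ Δ) :
    ∀ (π : Equiv.Perm ℕ) (Γ' Δ' : Finset (IFormula L ℕ)),
      (∀ x ∈ Γ, rn π x ∈ Γ') → (∀ x ∈ Δ, rn π x ∈ Δ') → LJm L c Γ' Δ' := by
  induction d with
  | @axAtom Γ Δ l R ts h1 h2 =>
    intro π Γ' Δ' g1 g2
    exact LJm.axAtom (R := R) (ts := fun i => (ts i).relabel π)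
      (by simpa [rn, IFormula.relabel] using g1 _ h1)
      (by simpa [rn, IFormula.relabel] using g2 _ h2)
  | @axBot Γ Δ h =>
    intro π Γ' Δ' g1 g2
    exact LJm.axBot (by simpa [rn, IFormula.relabel] using g1 _ h)
  | @disjL Γ Δ a b h d1 d2 ih1 ih2 =>
    intro π Γ' Δ' g1 g2
    refine LJm.disjL (a := rn π a) (b := rn π b)
      (by simpa [rn, IFormula.relabel] using g1 _ h) ?_ ?_
    · refine ih1 π _ _ ?_ g2
      intro x hx
      rcases Finset.mem_insert.1 hx with rfl | hx
      · exact Finset.mem_insert_self _ _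
      · exact Finset.mem_insert_of_mem (g1 _ hx)
    · refine ih2 π _ _ ?_ g2
      intro x hx
      rcases Finset.mem_insert.1 hx with rfl | hx
      · exact Finset.mem_insert_self _ _
      · exact Finset.mem_insert_of_mem (g1 _ hx)
  | @disjR Γ Δ a b h d1 ih1 =>
    intro π Γ' Δ' g1 g2
    refine LJm.disjR (a := rn π a) (b := rn π b)
      (by simpa [rn, IFormula.relabel] using g2 _ h) ?_
    refine ih1 π _ _ g1 ?_
    intro x hx
    rcases Finset.mem_insert.1 hx with rfl | hx
    · exact Finset.mem_insert_self _ _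
    rcases Finset.mem_insert.1 hx with rfl | hx
    · exact Finset.mem_insert_of_mem (Finset.mem_insert_self _ _)
    · exact Finset.mem_insert_of_mem (Finset.mem_insert_of_mem (g2 _ hx))
  | @conjL Γ Δ a b h d1 ih1 =>
    intro π Γ' Δ' g1 g2
    refine LJm.conjL (a := rn π a) (b := rn π b)
      (by simpa [rn, IFormula.relabel] using g1 _ h) ?_
    refine ih1 π _ _ ?_ g2
    intro x hx
    rcases Finset.mem_insert.1 hx with rfl | hx
    · exact Finset.mem_insert_self _ _
    rcases Finset.mem_insert.1 hx with rfl | hx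
    · exact Finset.mem_insert_of_mem (Finset.mem_insert_self _ _)
    · exact Finset.mem_insert_of_mem (Finset.mem_insert_of_mem (g1 _ hx))
  | @conjR Γ Δ a b h d1 d2 ih1 ih2 =>
    intro π Γ' Δ' g1 g2
    refine LJm.conjR (a := rn π a) (b := rn π b)
      (by simpa [rn, IFormula.relabel] using g2 _ h) ?_ ?_
    · refine ih1 π _ _ g1 ?_
      intro x hx
      rcases Finset.mem_insert.1 hx with rfl | hx
      · exact Finset.mem_insert_self _ _
      · exact Finset.mem_insert_of_mem (g2 _ hx)
    · refine ih2 π _ _ g1 ?_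
      intro x hx
      rcases Finset.mem_insert.1 hx with rfl | hx
      · exact Finset.mem_insert_self _ _
      · exact Finset.mem_insert_of_mem (g2 _ hx)
  | @implL Γ Δ a b h d1 d2 ih1 ih2 =>
    intro π Γ' Δ' g1 g2
    refine LJm.implL (a := rn π a) (b := rn π b)
      (by simpa [rn, IFormula.relabel] using g1 _ h) ?_ ?_
    · refine ih1 π _ _ g1 ?_
      intro x hx
      rcases Finset.mem_insert.1 hx with rfl | hx
      · exact Finset.mem_insert_self _ _
      · exact Finset.mem_insert_of_mem (g2 _ hx)
    · refine ih2 π _ _ ?_ g2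
      intro x hx
      rcases Finset.mem_insert.1 hx with rfl | hx
      · exact Finset.mem_insert_self _ _
      · exact Finset.mem_insert_of_mem (g1 _ hx)
  | @implR Γ Δ a b h d1 ih1 =>
    intro π Γ' Δ' g1 g2
    refine LJm.implR (a := rn π a) (b := rn π b)
      (by simpa [rn, IFormula.relabel] using g2 _ h) ?_
    refine ih1 π _ _ ?_ ?_
    · intro x hx
      rcases Finset.mem_insert.1 hx with rfl | hx
      · exact Finset.mem_insert_self _ _
      · exact Finset.mem_insert_of_mem (g1 _ hx)
    · intro x hx
      rcases Finset.mem_singleton.1 hx with rfl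
      exact Finset.mem_singleton_self _
  | @exR Γ Δ φ t h d1 ih1 =>
    intro π Γ' Δ' g1 g2
    refine LJm.exR (φ := φ.relabel (Option.map π)) (t.relabel π)
      (by simpa [rn, IFormula.relabel] using g2 _ h) ?_
    refine ih1 π _ _ g1 ?_
    intro x hx
    rcases Finset.mem_insert.1 hx with rfl | hx
    · rw [rn, relabel_openF]
      exact Finset.mem_insert_self _ _
    · exact Finset.mem_insert_of_mem (g2 _ hx)
  | @allL Γ Δ φ t h d1 ih1 =>
    intro π Γ' Δ' g1 g2
    refine LJm.allL (φ := φ.relabel (Option.map π)) (t.relabel π)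
      (by simpa [rn, IFormula.relabel] using g1 _ h) ?_
    refine ih1 π _ _ ?_ g2
    intro x hx
    rcases Finset.mem_insert.1 hx with rfl | hx
    · rw [rn, relabel_openF]
      exact Finset.mem_insert_self _ _
    · exact Finset.mem_insert_of_mem (g1 _ hx)
  | @exL Γ Δ φ a h hΓfv hΔfv d1 ih1 =>
    intro π Γ' Δ' g1 g2
    obtain ⟨b, hb⟩ := exists_fresh (fvS Γ' ∪ fvS Δ') ((fvS_finite _).union (fvS_finite _))
    have hbΓ' : ∀ ψ ∈ Γ', b ∉ fvF ψ := not_mem_fvS fun hc => hb (Or.inl hc)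
    have hbΔ' : ∀ ψ ∈ Δ', b ∉ fvF ψ := not_mem_fvS fun hc => hb (Or.inr hc)
    set φπ := φ.relabel (Option.map (π : ℕ → ℕ)) with hφπ
    have hmem' : IFormula.ex φπ ∈ Γ' := by simpa [rn, IFormula.relabel] using g1 _ h
    refine LJm.exL (φ := φπ) (a := b) hmem' hbΓ' hbΔ' ?_
    set π' : Equiv.Perm ℕ := π.trans (Equiv.swap (π a) b) with hπ'
    -- facts about freshness
    have haex : (a : ℕ) ∉ fvF (IFormula.ex φ) := hΓfv _ h
    have hπaex : (π a : ℕ) ∉ fvF (IFormula.ex φπ) := by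
      have : fvF (IFormula.ex φπ) = π '' fvF (IFormula.ex φ) := by
        have h0 := fvF_rn π (IFormula.ex φ)
        simpa [rn, IFormula.relabel, hφπ] using h0
      rw [this]
      rintro ⟨y, hy, hyp⟩
      exact haex (by rwa [π.injective hyp] at hy)
    have hbex : (b : ℕ) ∉ fvF (IFormula.ex φπ) := hbΓ' _ hmem'
    have key : ∀ x ∈ Γ, rn π' x = rn π x := by
      intro x hx
      apply rn_congr_of_agree
      intro y hy
      show Equiv.swap (π a) b (π y) = π y
      apply Equiv.swap_apply_of_ne_of_ne
      · intro hc
        exact hΓfv x hx (by rwa [π.injective hc] at hy)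
      · intro hc
        apply hbΓ' _ (g1 _ hx)
        rw [fvF_rn]
        exact ⟨y, hy, hc⟩
    have keyΔ : ∀ x ∈ Δ, rn π' x = rn π x := by
      intro x hx
      apply rn_congr_of_agree
      intro y hy
      show Equiv.swap (π a) b (π y) = π y
      apply Equiv.swap_apply_of_ne_of_ne
      · intro hc
        exact hΔfv x hx (by rwa [π.injective hc] at hy)
      · intro hc
        apply hbΔ' _ (g2 _ hx)
        rw [fvF_rn]
        exact ⟨y, hy, hc⟩
    have keyO : rn π' (openF φ (Term.var a)) = openF φπ (Term.var b) := by
      rw [rn, relabel_openF]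
      congr 1
      · -- φ.relabel (Option.map π') = φπ
        have h1 : (Option.map (π' : ℕ → ℕ)) =
            (Option.map (Equiv.swap (π a) b : ℕ → ℕ)) ∘ (Option.map (π : ℕ → ℕ)) := by
          funext o; cases o <;> rfl
        rw [h1, ← relabel_comp]
        rw [← hφπ]
        have h2 : IFormula.relabel (Option.map (Equiv.swap (π a) b : ℕ → ℕ)) φπ
            = IFormula.relabel id φπ := by
          apply relabel_congr
          rintro (_ | y) hy
          · rfl
          · show some (Equiv.swap (π a) b y) = some y
            congr 1
            apply Equiv.swap_apply_of_ne_of_ne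
            · intro hc; subst hc; exact hπaex hy
            · intro hc; subst hc; exact hbex hy
        rw [h2, relabel_id]
      · show Term.var (π' a) = Term.var b
        congr 1
        show Equiv.swap (π a) b (π a) = b
        exact Equiv.swap_apply_left _ _
    refine ih1 π' (insert (openF φπ (Term.var b)) Γ') Δ' ?_ ?_
    · intro x hx
      rcases Finset.mem_insert.1 hx with rfl | hx
      · rw [keyO]; exact Finset.mem_insert_self _ _
      · rw [key x hx]; exact Finset.mem_insert_of_mem (g1 _ hx)
    · intro x hx
      rw [keyΔ x hx]; exact g2 _ hx
  | @allR Γ Δ φ a h hΓfv hΔfv d1 ih1 =>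
    intro π Γ' Δ' g1 g2
    obtain ⟨b, hb⟩ := exists_fresh (fvS Γ' ∪ fvS Δ') ((fvS_finite _).union (fvS_finite _))
    have hbΓ' : ∀ ψ ∈ Γ', b ∉ fvF ψ := not_mem_fvS fun hc => hb (Or.inl hc)
    have hbΔ' : ∀ ψ ∈ Δ', b ∉ fvF ψ := not_mem_fvS fun hc => hb (Or.inr hc)
    set φπ := φ.relabel (Option.map (π : ℕ → ℕ)) with hφπ
    have hmem' : IFormula.all φπ ∈ Δ' := by simpa [rn, IFormula.relabel] using g2 _ h
    refine LJm.allR (φ := φπ) (a := b) hmem' hbΓ' hbΔ' ?_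
    set π' : Equiv.Perm ℕ := π.trans (Equiv.swap (π a) b) with hπ'
    have haex : (a : ℕ) ∉ fvF (IFormula.all φ) := hΔfv _ h
    have hπaex : (π a : ℕ) ∉ fvF (IFormula.all φπ) := by
      have : fvF (IFormula.all φπ) = π '' fvF (IFormula.all φ) := by
        have h0 := fvF_rn π (IFormula.all φ)
        simpa [rn, IFormula.relabel, hφπ] using h0
      rw [this]
      rintro ⟨y, hy, hyp⟩
      exact haex (by rwa [π.injective hyp] at hy)
    have hbex : (b : ℕ) ∉ fvF (IFormula.all φπ) := hbΔ' _ hmem'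
    have key : ∀ x ∈ Γ, rn π' x = rn π x := by
      intro x hx
      apply rn_congr_of_agree
      intro y hy
      show Equiv.swap (π a) b (π y) = π y
      apply Equiv.swap_apply_of_ne_of_ne
      · intro hc
        exact hΓfv x hx (by rwa [π.injective hc] at hy)
      · intro hc
        apply hbΓ' _ (g1 _ hx)
        rw [fvF_rn]
        exact ⟨y, hy, hc⟩
    have keyO : rn π' (openF φ (Term.var a)) = openF φπ (Term.var b) := by
      rw [rn, relabel_openF]
      congr 1
      · have h1 : (Option.map (π' : ℕ → ℕ)) =
            (Option.map (Equiv.swap (π a) b : ℕ → ℕ)) ∘ (Option.map (π : ℕ → ℕ)) := by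
          funext o; cases o <;> rfl
        rw [h1, ← relabel_comp]
        rw [← hφπ]
        have h2 : IFormula.relabel (Option.map (Equiv.swap (π a) b : ℕ → ℕ)) φπ
            = IFormula.relabel id φπ := by
          apply relabel_congr
          rintro (_ | y) hy
          · rfl
          · show some (Equiv.swap (π a) b y) = some y
            congr 1
            apply Equiv.swap_apply_of_ne_of_ne
            · intro hc; subst hc; exact hπaex hy
            · intro hc; subst hc; exact hbex hy
        rw [h2, relabel_id]
      · show Term.var (π' a) = Term.var b
        congr 1
        show Equiv.swap (π a) b (π a) = b
        exact Equiv.swap_apply_left _ _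
    refine ih1 π' Γ' {openF φπ (Term.var b)} ?_ ?_
    · intro x hx
      rw [key x hx]; exact g1 _ hx
    · intro x hx
      rcases Finset.mem_singleton.1 hx with rfl
      rw [keyO]; exact Finset.mem_singleton_self _
  | @cutRule Γ Δ α hc d1 d2 ih1 ih2 =>
    intro π Γ' Δ' g1 g2
    refine LJm.cutRule hc (α := rn π α) ?_ ?_
    · refine ih1 π _ _ g1 ?_
      intro x hx
      rcases Finset.mem_insert.1 hx with rfl | hx
      · exact Finset.mem_insert_self _ _
      · exact Finset.mem_insert_of_mem (g2 _ hx)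
    · refine ih2 π _ _ ?_ g2
      intro x hx
      rcases Finset.mem_insert.1 hx with rfl | hx
      · exact Finset.mem_insert_self _ _
      · exact Finset.mem_insert_of_mem (g1 _ hx)

theorem rn_one (φ : IFormula L ℕ) : rn 1 φ = φ := by
  have : ((1 : Equiv.Perm ℕ) : ℕ → ℕ) = id := rfl
  rw [rn, this, relabel_id]

/-- Weakening. -/
theorem weaken {c : Bool} {Γ Δ Γ' Δ' : Finset (IFormula L ℕ)} (d : LJm L c Γ Δ)
    (h1 : Γ ⊆ Γ') (h2 : Δ ⊆ Δ') : LJm L c Γ' Δ' := by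
  refine renWeak d 1 Γ' Δ' ?_ ?_
  · intro x hx; rw [rn_one]; exact h1 hx
  · intro x hx; rw [rn_one]; exact h2 hx

end Compl

namespace Compl
variable {L : FirstOrder.Language.{u, v}}
open FirstOrder Language

/-- General identity theorem. -/
theorem identity : ∀ {α : Type} (φ : IFormula L α) (σ : α → L.Term ℕ) {c : Bool}
    (Γ Δ : Finset (IFormula L ℕ)), φ.substF σ ∈ Γ → φ.substF σ ∈ Δ → LJm L c Γ Δ := by
  intro α φ
  induction φ with
  | falsum =>
    intro σ c Γ Δ h1 _
    exact LJm.axBot h1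
  | rel R ts =>
    intro σ c Γ Δ h1 h2
    exact LJm.axAtom (R := R) (ts := fun i => (ts i).subst σ) h1 h2
  | disj a b iha ihb =>
    intro σ c Γ Δ h1 h2
    refine LJm.disjL (a := a.substF σ) (b := b.substF σ) h1 ?_ ?_
    · refine LJm.disjR (a := a.substF σ) (b := b.substF σ) h2 ?_
      exact iha σ _ _ (Finset.mem_insert_self _ _) (Finset.mem_insert_self _ _)
    · refine LJm.disjR (a := a.substF σ) (b := b.substF σ) h2 ?_
      exact ihb σ _ _ (Finset.mem_insert_self _ _)
        (Finset.mem_insert_of_mem (Finset.mem_insert_self _ _))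
  | conj a b iha ihb =>
    intro σ c Γ Δ h1 h2
    refine LJm.conjL (a := a.substF σ) (b := b.substF σ) h1 ?_
    refine LJm.conjR (a := a.substF σ) (b := b.substF σ) h2 ?_ ?_
    · exact iha σ _ _ (Finset.mem_insert_self _ _) (Finset.mem_insert_self _ _)
    · exact ihb σ _ _ (Finset.mem_insert_of_mem (Finset.mem_insert_self _ _))
        (Finset.mem_insert_self _ _)
  | impl a b iha ihb =>
    intro σ c Γ Δ h1 h2
    refine LJm.implR (a := a.substF σ) (b := b.substF σ) h2 ?_
    refine LJm.implL (a := a.substF σ) (b := b.substF σ)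
      (Finset.mem_insert_of_mem h1) ?_ ?_
    · exact iha σ _ _ (Finset.mem_insert_self _ _) (Finset.mem_insert_self _ _)
    · exact ihb σ _ _ (Finset.mem_insert_self _ _) (Finset.mem_singleton_self _)
  | ex φ ih =>
    intro σ c Γ Δ h1 h2
    rw [substF_ex] at h1 h2
    obtain ⟨a, ha⟩ := exists_fresh (fvS Γ ∪ fvS Δ) ((fvS_finite _).union (fvS_finite _))
    refine LJm.exL (φ := φ.substF (sLift σ)) (a := a) h1
      (not_mem_fvS fun hc => ha (Or.inl hc)) (not_mem_fvS fun hc => ha (Or.inr hc)) ?_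
    refine LJm.exR (φ := φ.substF (sLift σ)) (Term.var a) h2 ?_
    rw [openF_substF_lift φ σ (Term.var a)]
    exact ih _ _ _ (Finset.mem_insert_self _ _) (Finset.mem_insert_self _ _)
  | all φ ih =>
    intro σ c Γ Δ h1 h2
    rw [substF_all] at h1 h2
    obtain ⟨a, ha⟩ := exists_fresh (fvS Γ ∪ fvS Δ) ((fvS_finite _).union (fvS_finite _))
    refine LJm.allR (φ := φ.substF (sLift σ)) (a := a) h2
      (not_mem_fvS fun hc => ha (Or.inl hc)) (not_mem_fvS fun hc => ha (Or.inr hc)) ?_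
    refine LJm.allL (φ := φ.substF (sLift σ)) (Term.var a) h1 ?_
    rw [openF_substF_lift φ σ (Term.var a)]
    exact ih _ _ _ (Finset.mem_insert_self _ _) (Finset.mem_singleton_self _)

theorem identity' {c : Bool} {φ : IFormula L ℕ} {Γ Δ : Finset (IFormula L ℕ)}
    (h1 : φ ∈ Γ) (h2 : φ ∈ Δ) : LJm L c Γ Δ := by
  have := identity (c := c) φ Term.var Γ Δ
  rw [substF_var] at this
  exact this h1 h2

/-! ### Set-level consequence -/

/-- Derivability from a possibly infinite set of assumptions. -/
def Thm (T : Set (IFormula L ℕ)) (Δ : Finset (IFormula L ℕ)) : Prop :=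
  ∃ G : Finset (IFormula L ℕ), ↑G ⊆ T ∧ LJm L true G Δ

theorem Thm.mono {T T' : Set (IFormula L ℕ)} {Δ : Finset (IFormula L ℕ)}
    (h : Thm T Δ) (hT : T ⊆ T') : Thm T' Δ := by
  obtain ⟨G, hG, hd⟩ := h
  exact ⟨G, hG.trans hT, hd⟩

theorem Thm.weakΔ {T : Set (IFormula L ℕ)} {Δ Δ' : Finset (IFormula L ℕ)}
    (h : Thm T Δ) (hΔ : Δ ⊆ Δ') : Thm T Δ' := by
  obtain ⟨G, hG, hd⟩ := h
  exact ⟨G, hG, weaken hd (le_refl _) hΔ⟩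

theorem Thm.ofLJm {T : Set (IFormula L ℕ)} {Γ Δ : Finset (IFormula L ℕ)}
    (hG : ↑Γ ⊆ T) (hd : LJm L true Γ Δ) : Thm T Δ := ⟨Γ, hG, hd⟩

theorem Thm.mem {T : Set (IFormula L ℕ)} {Δ : Finset (IFormula L ℕ)} {φ : IFormula L ℕ}
    (h1 : φ ∈ T) (h2 : φ ∈ Δ) : Thm T Δ :=
  ⟨{φ}, by simpa using h1, identity' (Finset.mem_singleton_self _) h2⟩

theorem Thm.cut {T : Set (IFormula L ℕ)} {Δ : Finset (IFormula L ℕ)} {φ : IFormula L ℕ}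
    (h1 : Thm T {φ}) (h2 : Thm (insert φ T) Δ) : Thm T Δ := by
  obtain ⟨G1, hG1, hd1⟩ := h1
  obtain ⟨G2, hG2, hd2⟩ := h2
  refine ⟨G1 ∪ (G2.erase φ), ?_, ?_⟩
  · intro x hx
    rcases Finset.mem_union.1 hx with hx | hx
    · exact hG1 hx
    · have hx' := Finset.mem_of_mem_erase hx
      rcases hG2 hx' with h | h
      · exact absurd h (Finset.ne_of_mem_erase hx)
      · exact h
  · refine LJm.cutRule rfl (α := φ) ?_ ?_
    · exact weaken hd1 Finset.subset_union_left
        (by intro x hx; rcases Finset.mem_singleton.1 hx with rfl; exact Finset.mem_insert_self _ _)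
    · refine weaken hd2 ?_ (le_refl _)
      intro x hx
      by_cases hxφ : x = φ
      · subst hxφ; exact Finset.mem_insert_self _ _
      · exact Finset.mem_insert_of_mem
          (Finset.mem_union_right _ (Finset.mem_erase.2 ⟨hxφ, hx⟩))

theorem finset_subset_chain {X : Type*} {T : ℕ → Set X} (mono : Monotone T)
    (G : Finset X) (h : ↑G ⊆ ⋃ n, T n) : ∃ n, ↑G ⊆ T n := by
  classical
  induction G using Finset.induction_on with
  | empty => exact ⟨0, by simp⟩
  | @insert a s hx ih =>
    have hs : (↑s : Set X) ⊆ ⋃ n, T n := by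
      intro x hxs
      exact h (by simpa using Or.inr hxs)
    obtain ⟨n, hn⟩ := ih hs
    have ha : a ∈ ⋃ n, T n := h (by simp)
    obtain ⟨m, hm⟩ := Set.mem_iUnion.1 ha
    refine ⟨max n m, ?_⟩
    intro x hxx
    rcases Finset.mem_insert.1 (by exact_mod_cast hxx) with rfl | hxx
    · exact mono (le_max_right n m) hm
    · exact mono (le_max_left n m) (hn hxx)

end Compl

namespace Compl
open FirstOrder Language

variable {L : FirstOrder.Language.{u, v}}

section Codes

variable (fsym : ℕ → Option (Σ n, L.Functions n)) (rsym : ℕ → Option (Σ n, L.Relations n))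

/-- The countable sub-language determined by the symbol enumerations. -/
def L0 : FirstOrder.Language.{0, 0} where
  Functions := fun n => {i : ℕ // ∃ g : L.Functions n, fsym i = some ⟨n, g⟩}
  Relations := fun n => {i : ℕ // ∃ R : L.Relations n, rsym i = some ⟨n, R⟩}

variable {fsym} {rsym}

noncomputable def symF {n : ℕ} (f : (L0 fsym rsym).Functions n) : L.Functions n := f.2.choose

theorem symF_spec {n : ℕ} (f : (L0 fsym rsym).Functions n) : fsym f.1 = some ⟨n, symF f⟩ :=
  f.2.choose_spec

noncomputable def symR {n : ℕ} (R : (L0 (L := L) fsym rsym).Relations n) : L.Relations n :=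
  R.2.choose

theorem symR_spec {n : ℕ} (R : (L0 (L := L) fsym rsym).Relations n) :
    rsym R.1 = some ⟨n, symR R⟩ := R.2.choose_spec

/-- Interpreting a small term as an `L`-term. -/
noncomputable def upT {α : Type} : (L0 (L := L) fsym rsym).Term α → L.Term α
  | .var a => Term.var a
  | .func f ts => Term.func (symF f) (fun i => upT (ts i))

/-- Interpreting a small formula as an `L`-formula. -/
noncomputable def upF : ∀ {α : Type}, IFormula (L0 (L := L) fsym rsym) α → IFormula L α
  | _, .falsum => .falsum
  | _, .rel R ts => .rel (symR R) (fun i => upT (ts i))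
  | _, .disj a b => .disj (upF a) (upF b)
  | _, .conj a b => .conj (upF a) (upF b)
  | _, .impl a b => .impl (upF a) (upF b)
  | _, .ex φ => .ex (upF φ)
  | _, .all φ => .all (upF φ)

/-- Good terms: using only enumerated symbols. -/
def goodT {α : Type} : L.Term α → Prop
  | .var _ => True
  | .func (l := n) f ts => (∃ i, fsym i = some ⟨n, f⟩) ∧ ∀ j, goodT (ts j)

/-- Good formulas. -/
def goodF (rsym : ℕ → Option (Σ n, L.Relations n)) : ∀ {α : Type}, IFormula L α → Prop
  | _, .falsum => True
  | _, .rel (l := n) R ts => (∃ i, rsym i = some ⟨n, R⟩) ∧ ∀ j, goodT (fsym := fsym) (ts j)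
  | _, .disj a b => goodF rsym a ∧ goodF rsym b
  | _, .conj a b => goodF rsym a ∧ goodF rsym b
  | _, .impl a b => goodF rsym a ∧ goodF rsym b
  | _, .ex φ => goodF rsym φ
  | _, .all φ => goodF rsym φ

theorem goodT_surj : ∀ {α : Type} (t : L.Term α), goodT (fsym := fsym) t →
    ∃ u : (L0 (L := L) fsym rsym).Term α, upT u = t := by
  intro α t
  induction t with
  | var a => exact fun _ => ⟨.var a, rfl⟩
  | @func n f ts ih =>
    intro hg
    rcases (show (∃ i, fsym i = some ⟨n, f⟩) ∧ (∀ j, goodT (fsym := fsym) (ts j)) from hg)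
      with ⟨⟨i, hi⟩, hts⟩
    have hf : ∃ g : L.Functions n, fsym i = some ⟨n, g⟩ := ⟨f, hi⟩
    choose u hu using fun j => ih j (hts j)
    refine ⟨.func ⟨i, hf⟩ u, ?_⟩
    have hsf : symF (fsym := fsym) (rsym := rsym) ⟨i, hf⟩ = f := by
      have := symF_spec (fsym := fsym) (rsym := rsym) ⟨i, hf⟩
      rw [hi] at this
      have h2 := Option.some_injective _ this
      rw [Sigma.mk.inj_iff] at h2
      exact (eq_of_heq h2.2).symm
    show Term.func (symF ⟨i, hf⟩) (fun j => upT (u j)) = Term.func f ts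
    rw [hsf]
    exact congrArg _ (funext hu)

theorem goodF_surj : ∀ {α : Type} (φ : IFormula L α), goodF (fsym := fsym) rsym φ →
    ∃ ψ : IFormula (L0 (L := L) fsym rsym) α, upF ψ = φ := by
  intro α φ
  induction φ with
  | falsum => exact fun _ => ⟨.falsum, rfl⟩
  | @rel α n R ts =>
    intro hg
    rcases (show (∃ i, rsym i = some ⟨n, R⟩) ∧ (∀ j, goodT (fsym := fsym) (ts j)) from hg)
      with ⟨⟨i, hi⟩, hts⟩
    have hR : ∃ S : L.Relations n, rsym i = some ⟨n, S⟩ := ⟨R, hi⟩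
    choose u hu using fun j => goodT_surj (ts j) (hts j)
    refine ⟨.rel ⟨i, hR⟩ u, ?_⟩
    have hsf : symR (fsym := fsym) (rsym := rsym) ⟨i, hR⟩ = R := by
      have := symR_spec (fsym := fsym) (rsym := rsym) ⟨i, hR⟩
      rw [hi] at this
      have h2 := Option.some_injective _ this
      rw [Sigma.mk.inj_iff] at h2
      exact (eq_of_heq h2.2).symm
    show IFormula.rel (symR ⟨i, hR⟩) (fun j => upT (u j)) = IFormula.rel R ts
    rw [hsf]
    exact congrArg _ (funext hu)
  | disj a b iha ihb =>
    intro hg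
    rcases (show goodF (fsym := fsym) rsym a ∧ goodF (fsym := fsym) rsym b from hg) with ⟨ha, hb⟩
    obtain ⟨ψa, hψa⟩ := iha ha
    obtain ⟨ψb, hψb⟩ := ihb hb
    exact ⟨.disj ψa ψb, by rw [upF, hψa, hψb]⟩
  | conj a b iha ihb =>
    intro hg
    rcases (show goodF (fsym := fsym) rsym a ∧ goodF (fsym := fsym) rsym b from hg) with ⟨ha, hb⟩
    obtain ⟨ψa, hψa⟩ := iha ha
    obtain ⟨ψb, hψb⟩ := ihb hb
    exact ⟨.conj ψa ψb, by rw [upF, hψa, hψb]⟩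
  | impl a b iha ihb =>
    intro hg
    rcases (show goodF (fsym := fsym) rsym a ∧ goodF (fsym := fsym) rsym b from hg) with ⟨ha, hb⟩
    obtain ⟨ψa, hψa⟩ := iha ha
    obtain ⟨ψb, hψb⟩ := ihb hb
    exact ⟨.impl ψa ψb, by rw [upF, hψa, hψb]⟩
  | ex φ ih =>
    intro h
    obtain ⟨ψ, hψ⟩ := ih h
    exact ⟨.ex ψ, by rw [upF, hψ]⟩
  | all φ ih =>
    intro h
    obtain ⟨ψ, hψ⟩ := ih h
    exact ⟨.all ψ, by rw [upF, hψ]⟩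

/-! ### commutation of `up` with substitution -/

theorem upT_relabel : ∀ {α β : Type} (u : (L0 (L := L) fsym rsym).Term α) (f : α → β),
    upT (u.relabel f) = (upT u).relabel f := by
  intro α β u
  induction u with
  | var a => intro f; rfl
  | func g ts ih =>
    intro f
    show upT (.func g fun i => (ts i).relabel f) = _
    rw [upT]
    show Term.func (symF g) (fun i => upT ((ts i).relabel f)) = _
    simp only [upT, Term.relabel]
    exact congrArg _ (funext fun i => ih i f)

theorem upT_subst : ∀ {α β : Type} (u : (L0 (L := L) fsym rsym).Term α)
    (σ : α → (L0 (L := L) fsym rsym).Term β),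
    upT (u.subst σ) = (upT u).subst (fun a => upT (σ a)) := by
  intro α β u
  induction u with
  | var a => intro σ; rfl
  | func g ts ih =>
    intro σ
    show upT (.func g fun i => (ts i).subst σ) = _
    rw [upT]
    simp only [upT, Term.subst]
    exact congrArg _ (funext fun i => ih i σ)

theorem upF_substF : ∀ {α : Type} (ψ : IFormula (L0 (L := L) fsym rsym) α) {β : Type}
    (σ : α → (L0 (L := L) fsym rsym).Term β),
    upF (ψ.substF σ) = (upF ψ).substF (fun a => upT (σ a)) := by
  intro α ψ
  induction ψ with
  | falsum => intro β σ; rfl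
  | rel R ts =>
    intro β σ
    simp only [IFormula.substF, upF]
    exact congrArg _ (funext fun i => upT_subst _ _)
  | disj a b iha ihb => intro β σ; simp only [IFormula.substF, upF]; rw [iha, ihb]
  | conj a b iha ihb => intro β σ; simp only [IFormula.substF, upF]; rw [iha, ihb]
  | impl a b iha ihb => intro β σ; simp only [IFormula.substF, upF]; rw [iha, ihb]
  | ex φ ih =>
    intro β σ
    show IFormula.ex (upF (φ.substF (sLift σ)))
      = (IFormula.ex (upF φ)).substF fun a => upT (σ a)
    rw [substF_ex]
    congr 1
    rw [ih (sLift σ)]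
    apply substF_congr
    rintro (_ | a) _
    · rfl
    · exact upT_relabel _ _
  | all φ ih =>
    intro β σ
    show IFormula.all (upF (φ.substF (sLift σ)))
      = (IFormula.all (upF φ)).substF fun a => upT (σ a)
    rw [substF_all]
    congr 1
    rw [ih (sLift σ)]
    apply substF_congr
    rintro (_ | a) _
    · rfl
    · exact upT_relabel _ _

theorem tmFv_upT : ∀ {α : Type} (u : (L0 (L := L) fsym rsym).Term α), tmFv (upT u) = tmFv u := by
  intro α u
  induction u with
  | var a => rfl
  | func g ts ih =>
    show tmFv (Term.func (symF g) fun i => upT (ts i)) = _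
    simp only [tmFv]
    exact Set.iUnion_congr fun i => ih i

theorem fvF_upF : ∀ {α : Type} (ψ : IFormula (L0 (L := L) fsym rsym) α),
    fvF (upF ψ) = fvF ψ := by
  intro α ψ
  induction ψ with
  | falsum => rfl
  | rel R ts =>
    show fvF (IFormula.rel (symR R) fun i => upT (ts i)) = _
    simp only [fvF]
    exact Set.iUnion_congr fun i => tmFv_upT _
  | disj a b iha ihb => show fvF (upF a) ∪ fvF (upF b) = _; rw [iha, ihb]; rfl
  | conj a b iha ihb => show fvF (upF a) ∪ fvF (upF b) = _; rw [iha, ihb]; rfl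
  | impl a b iha ihb => show fvF (upF a) ∪ fvF (upF b) = _; rw [iha, ihb]; rfl
  | ex φ ih => show {a | some a ∈ fvF (upF φ)} = _; rw [ih]; rfl
  | all φ ih => show {a | some a ∈ fvF (upF φ)} = _; rw [ih]; rfl

/-- inversion for `upF` at `disj` -/
theorem upF_eq_disj {a b : IFormula L ℕ} {ψ : IFormula (L0 (L := L) fsym rsym) ℕ}
    (h : upF ψ = a.disj b) : ∃ ψa ψb, ψ = ψa.disj ψb ∧ upF ψa = a ∧ upF ψb = b := by
  cases ψ <;> simp only [upF] at h
  case disj ψa ψb =>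
    obtain ⟨h1, h2⟩ := by
      have := h
      rwa [IFormula.disj.injEq] at this
    exact ⟨ψa, ψb, rfl, h1, h2⟩
  all_goals cases h

/-- inversion for `upF` at `ex` -/
theorem upF_eq_ex {b : IFormula L (Option ℕ)} {ψ : IFormula (L0 (L := L) fsym rsym) ℕ}
    (h : upF ψ = IFormula.ex b) : ∃ ψb, ψ = IFormula.ex ψb ∧ upF ψb = b := by
  cases ψ <;> simp only [upF] at h
  case ex ψb =>
    obtain h1 := by
      have := h
      rwa [IFormula.ex.injEq] at this
    exact ⟨ψb, rfl, h1⟩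
  all_goals cases h

end Codes

end Compl

namespace Compl
open FirstOrder Language

variable {L : FirstOrder.Language.{u, v}}
variable {fsym : ℕ → Option (Σ n, L.Functions n)} {rsym : ℕ → Option (Σ n, L.Relations n)}

/-- Encoding of small terms. -/
def encTm {α : Type} (ea : α → ℕ) : (L0 (L := L) fsym rsym).Term α → ℕ
  | .var a => Nat.pair 0 (ea a)
  | .func (l := l) f ts =>
      Nat.pair 1 (Nat.pair l (Nat.pair f.1 (Encodable.encode (List.ofFn fun i => encTm ea (ts i)))))

def extN {α : Type} (ea : α → ℕ) : Option α → ℕ := fun o => o.elim 0 (fun a => ea a + 1)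

theorem extN_inj {α : Type} {ea : α → ℕ} (h : Function.Injective ea) :
    Function.Injective (extN ea) := by
  rintro (_ | a) (_ | b) hab <;> simp [extN] at hab ⊢
  exact h hab

/-- Encoding of small formulas. -/
def encF : ∀ {α : Type}, (α → ℕ) → IFormula (L0 (L := L) fsym rsym) α → ℕ
  | _, _, .falsum => Nat.pair 0 0
  | _, ea, .rel (l := l) R ts =>
      Nat.pair 1 (Nat.pair l (Nat.pair R.1 (Encodable.encode (List.ofFn fun i => encTm ea (ts i)))))
  | _, ea, .disj a b => Nat.pair 2 (Nat.pair (encF ea a) (encF ea b))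
  | _, ea, .conj a b => Nat.pair 3 (Nat.pair (encF ea a) (encF ea b))
  | _, ea, .impl a b => Nat.pair 4 (Nat.pair (encF ea a) (encF ea b))
  | _, ea, .ex φ => Nat.pair 5 (encF (extN ea) φ)
  | _, ea, .all φ => Nat.pair 6 (encF (extN ea) φ)

theorem encTm_inj {α : Type} {ea : α → ℕ} (hea : Function.Injective ea) :
    ∀ {t s : (L0 (L := L) fsym rsym).Term α}, encTm ea t = encTm ea s → t = s := by
  intro t
  induction t with
  | var a =>
    intro s h
    cases s with
    | var b =>
      simp only [encTm, Nat.pair_eq_pair] at h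
      rw [hea h.2]
    | func g ss =>
      simp only [encTm, Nat.pair_eq_pair] at h
      exact absurd h.1 (by decide)
  | @func l f ts ih =>
    intro s h
    cases s with
    | var b =>
      simp only [encTm, Nat.pair_eq_pair] at h
      exact absurd h.1 (by decide)
    | @func l' g ss =>
      simp only [encTm, Nat.pair_eq_pair] at h
      obtain ⟨-, hl, hfg, hts⟩ := h
      subst hl
      have hfg' : f = g := Subtype.ext hfg
      subst hfg'
      have hlists := Encodable.encode_injective hts
      rw [List.ofFn_inj] at hlists
      have : ts = ss := funext fun i => ih i (congrFun hlists i)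
      rw [this]

theorem encF_inj : ∀ {α : Type} (φ ψ : IFormula (L0 (L := L) fsym rsym) α) (ea : α → ℕ),
    Function.Injective ea → encF ea φ = encF ea ψ → φ = ψ := by
  intro α φ
  induction φ with
  | falsum =>
    intro ψ ea hea h
    cases ψ <;> simp only [encF, Nat.pair_eq_pair] at h
    case falsum => rfl
    all_goals exact absurd h.1 (by decide)
  | @rel α l R ts =>
    intro ψ ea hea h
    cases ψ <;> simp only [encF, Nat.pair_eq_pair] at h
    case rel l' R' ts' =>
      obtain ⟨-, hl, hR, hts⟩ := h
      subst hl
      have hR' : R = R' := Subtype.ext hR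
      subst hR'
      have hlists := Encodable.encode_injective hts
      rw [List.ofFn_inj] at hlists
      have : ts = ts' := funext fun i => encTm_inj hea (congrFun hlists i)
      rw [this]
    all_goals exact absurd h.1 (by decide)
  | disj a b iha ihb =>
    intro ψ ea hea h
    cases ψ <;> simp only [encF, Nat.pair_eq_pair] at h
    case disj a' b' =>
      rw [iha a' ea hea h.2.1, ihb b' ea hea h.2.2]
    all_goals exact absurd h.1 (by decide)
  | conj a b iha ihb =>
    intro ψ ea hea h
    cases ψ <;> simp only [encF, Nat.pair_eq_pair] at h
    case conj a' b' =>
      rw [iha a' ea hea h.2.1, ihb b' ea hea h.2.2]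
    all_goals exact absurd h.1 (by decide)
  | impl a b iha ihb =>
    intro ψ ea hea h
    cases ψ <;> simp only [encF, Nat.pair_eq_pair] at h
    case impl a' b' =>
      rw [iha a' ea hea h.2.1, ihb b' ea hea h.2.2]
    all_goals exact absurd h.1 (by decide)
  | ex φ ih =>
    intro ψ ea hea h
    cases ψ <;> simp only [encF, Nat.pair_eq_pair] at h
    case ex φ' =>
      rw [ih φ' (extN ea) (extN_inj hea) h.2]
    all_goals exact absurd h.1 (by decide)
  | all φ ih =>
    intro ψ ea hea h
    cases ψ <;> simp only [encF, Nat.pair_eq_pair] at h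
    case all φ' =>
      rw [ih φ' (extN ea) (extN_inj hea) h.2]
    all_goals exact absurd h.1 (by decide)

instance : Countable (IFormula (L0 (L := L) fsym rsym) ℕ) :=
  ⟨⟨encF (fun n => n), fun φ ψ h => encF_inj φ ψ _ (fun _ _ h => h) h⟩⟩

end Compl

namespace Compl
open FirstOrder Language

variable {L : FirstOrder.Language.{u, v}}

/-- free variables of a set of formulas -/
def fvT (T : Set (IFormula L ℕ)) : Set ℕ := ⋃ φ ∈ T, fvF φ

theorem fvT_finite {T : Set (IFormula L ℕ)} (h : T.Finite) : (fvT T).Finite :=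
  Set.Finite.biUnion h fun φ _ => fvF_finite φ

section Lind

variable (S : Set (IFormula L ℕ)) (Δt : Finset (IFormula L ℕ)) (V' Res : Set ℕ)
variable (enum : ℕ → IFormula L ℕ)

/-- property of a good fresh witness variable -/
def FreshP (T : Set (IFormula L ℕ)) (φ : IFormula L ℕ) (c : ℕ) : Prop :=
  c ∈ Res ∧ (∀ ψ ∈ T, c ∉ fvF ψ) ∧ c ∉ fvF φ ∧ (∀ ψ ∈ Δt, c ∉ fvF ψ)

open Classical in
/-- choice of a fresh witness variable -/
noncomputable def freshC (T : Set (IFormula L ℕ)) (φ : IFormula L ℕ) : ℕ :=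
  if h : ∃ c, FreshP Δt Res T φ c then h.choose else 0

theorem freshC_spec {T : Set (IFormula L ℕ)} {φ : IFormula L ℕ}
    (h : ∃ c, FreshP Δt Res T φ c) : FreshP Δt Res T φ (freshC Δt Res T φ) := by
  rw [freshC, dif_pos h]
  exact h.choose_spec

/-- the witness formulas added along with an existential formula -/
noncomputable def wit (T : Set (IFormula L ℕ)) (φ : IFormula L ℕ) : Set (IFormula L ℕ) :=
  {χ | ∃ body, φ = IFormula.ex body ∧ χ = openF body (Term.var (freshC Δt Res T φ))}

theorem wit_subsingleton (T : Set (IFormula L ℕ)) (φ : IFormula L ℕ) :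
    (wit Δt Res T φ).Subsingleton := by
  rintro χ₁ ⟨b₁, hb₁, rfl⟩ χ₂ ⟨b₂, hb₂, rfl⟩
  rw [hb₁] at hb₂
  rw [IFormula.ex.injEq] at hb₂
  rw [hb₂]

theorem wit_empty {T : Set (IFormula L ℕ)} {φ : IFormula L ℕ}
    (h : ∀ body, φ ≠ IFormula.ex body) : wit Δt Res T φ = ∅ := by
  ext χ
  simp only [wit, Set.mem_setOf_eq, Set.mem_empty_iff_false, iff_false]
  rintro ⟨body, hb, -⟩
  exact h body hb

open Classical in
/-- the saturation chain -/
noncomputable def chain : ℕ → Set (IFormula L ℕ)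
  | 0 => S
  | n + 1 =>
      let T := chain n
      @ite _ ((fvF (enum n) ⊆ V') ∧ ¬ Thm (insert (enum n) T) Δt) (Classical.dec _)
        (T ∪ {enum n} ∪ wit Δt Res T (enum n)) T

theorem chain_le_succ (n : ℕ) : chain S Δt V' Res enum n ⊆ chain S Δt V' Res enum (n + 1) := by
  show chain S Δt V' Res enum n ⊆ @ite _ _ (Classical.dec _) _ _
  split
  · exact fun x hx => Or.inl (Or.inl hx)
  · exact fun x hx => hx

theorem chain_mono : Monotone (chain S Δt V' Res enum) :=
  monotone_nat_of_le_succ (chain_le_succ S Δt V' Res enum)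

theorem chain_diff_finite (n : ℕ) : (chain S Δt V' Res enum n \ S).Finite := by
  induction n with
  | zero => simp [chain]
  | succ n ih =>
    show ((@ite _ _ (Classical.dec _) _ _ : Set (IFormula L ℕ)) \ S).Finite
    split
    · have hfin : ((chain S Δt V' Res enum n \ S) ∪
          ({enum n} ∪ wit Δt Res (chain S Δt V' Res enum n) (enum n))).Finite :=
        ih.union ((Set.finite_singleton (enum n)).union
          (Set.Subsingleton.finite (wit_subsingleton Δt Res (chain S Δt V' Res enum n) (enum n))))
      refine hfin.subset ?_
      intro x hx
      obtain ⟨hx1, hx2⟩ := hx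
      rcases hx1 with (hx1 | hx1) | hx1
      · exact Or.inl ⟨hx1, hx2⟩
      · exact Or.inr (Or.inl hx1)
      · exact Or.inr (Or.inr hx1)
    · exact ih

end Lind

end Compl

namespace Compl
open FirstOrder Language

variable {L : FirstOrder.Language.{u, v}}
variable (fsym : ℕ → Option (Σ n, L.Functions n)) (rsym : ℕ → Option (Σ n, L.Relations n))

/-- The set of good formulas: interpretations of small formulas. -/
def Good : Set (IFormula L ℕ) := Set.range (upF (fsym := fsym) (rsym := rsym) (α := ℕ))

variable {fsym} {rsym}

theorem upF_openF (ψ : IFormula (L0 (L := L) fsym rsym) (Option ℕ))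
    (u : (L0 (L := L) fsym rsym).Term ℕ) :
    upF (openF ψ u) = openF (upF ψ) (upT u) := by
  unfold openF
  rw [upF_substF]
  exact congrArg _ (funext fun o => by cases o <;> rfl)

theorem good_openF {body : IFormula L (Option ℕ)} {c : ℕ}
    (h : IFormula.ex body ∈ Good fsym rsym) : openF body (Term.var c) ∈ Good fsym rsym := by
  obtain ⟨ψ, hψ⟩ := h
  obtain ⟨ψb, rfl, hb⟩ := upF_eq_ex hψ
  refine ⟨openF ψb (Term.var c), ?_⟩
  rw [upF_openF, hb]
  rfl

theorem good_disj_inv {a b : IFormula L ℕ} (h : a.disj b ∈ Good fsym rsym) :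
    a ∈ Good fsym rsym ∧ b ∈ Good fsym rsym := by
  obtain ⟨ψ, hψ⟩ := h
  obtain ⟨ψa, ψb, rfl, ha, hb⟩ := upF_eq_disj hψ
  exact ⟨⟨ψa, ha⟩, ⟨ψb, hb⟩⟩

theorem good_ex_inv {b : IFormula L (Option ℕ)} (h : IFormula.ex b ∈ Good fsym rsym) :
    ∃ ψ : IFormula (L0 (L := L) fsym rsym) (Option ℕ), upF ψ = b := by
  obtain ⟨ψ, hψ⟩ := h
  obtain ⟨ψb, rfl, hb⟩ := upF_eq_ex hψ
  exact ⟨ψb, hb⟩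

section Lind2

variable (S : Set (IFormula L ℕ)) (Δt : Finset (IFormula L ℕ)) (V' Res : Set ℕ)
variable (enum : ℕ → IFormula L ℕ)

theorem freshC_mem (hRes : Res ⊆ V') (h0 : 0 ∈ V') (T : Set (IFormula L ℕ))
    (φ : IFormula L ℕ) : freshC Δt Res T φ ∈ V' := by
  rw [freshC]
  split
  · next h => exact hRes h.choose_spec.1
  · exact h0

theorem chain_succ_eq (n : ℕ) :
    ((fvF (enum n) ⊆ V' ∧ ¬ Thm (insert (enum n) (chain S Δt V' Res enum n)) Δt) ∧
      chain S Δt V' Res enum (n+1) = chain S Δt V' Res enum n ∪ {enum n} ∪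
        wit Δt Res (chain S Δt V' Res enum n) (enum n)) ∨
    (¬ (fvF (enum n) ⊆ V' ∧ ¬ Thm (insert (enum n) (chain S Δt V' Res enum n)) Δt) ∧
      chain S Δt V' Res enum (n+1) = chain S Δt V' Res enum n) := by
  show ((_ ∧ @ite _ _ (Classical.dec _) _ _ = _) ∨ (_ ∧ @ite _ _ (Classical.dec _) _ _ = _))
  by_cases h : fvF (enum n) ⊆ V' ∧ ¬ Thm (insert (enum n) (chain S Δt V' Res enum n)) Δt
  · exact Or.inl ⟨h, if_pos h⟩
  · exact Or.inr ⟨h, if_neg h⟩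

theorem chain_inv (hS : S ⊆ Good fsym rsym) (hSfv : ∀ φ ∈ S, fvF φ ⊆ V')
    (hgenum : ∀ n, enum n ∈ Good fsym rsym) (hRes : Res ⊆ V') (h0 : 0 ∈ V') :
    ∀ n, ∀ φ ∈ chain S Δt V' Res enum n, φ ∈ Good fsym rsym ∧ fvF φ ⊆ V' := by
  intro n
  induction n with
  | zero => exact fun φ hφ => ⟨hS hφ, hSfv φ hφ⟩
  | succ n ih =>
    rcases chain_succ_eq S Δt V' Res enum n with ⟨hcan, heq⟩ | ⟨_, heq⟩
    · rw [heq]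
      rintro φ ((hφ | hφ) | hφ)
      · exact ih φ hφ
      · rcases hφ with rfl
        exact ⟨hgenum n, hcan.1⟩
      · obtain ⟨body, hbody, rfl⟩ := hφ
        constructor
        · apply good_openF
          rw [← hbody]
          exact hgenum n
        · refine (fvF_openF _ _).trans ?_
          intro x hx
          rcases hx with hx | hx
          · simp only [tmFv, Set.mem_singleton_iff] at hx
            subst hx
            exact freshC_mem Δt V' Res hRes h0 _ _
          · rw [← hbody] at hx
            exact hcan.1 hx
    · rw [heq]; exact ih

theorem fresh_exists (hRes : Res.Infinite) (hdisj : ∀ c ∈ Res, c ∉ fvT S) (n : ℕ)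
    (φ : IFormula L ℕ) :
    ∃ c, FreshP Δt Res (chain S Δt V' Res enum n) φ c := by
  have hbad : (fvT (chain S Δt V' Res enum n \ S) ∪ (fvF φ ∪ fvS Δt)).Finite :=
    (fvT_finite (chain_diff_finite S Δt V' Res enum n)).union
      ((fvF_finite φ).union (fvS_finite Δt))
  obtain ⟨c, hc⟩ := (hRes.diff hbad).nonempty
  refine ⟨c, hc.1, ?_, ?_, ?_⟩
  · intro ψ hψ hcψ
    by_cases hψS : ψ ∈ S
    · exact hdisj c hc.1 (Set.mem_biUnion hψS hcψ)
    · exact hc.2 (Or.inl (Set.mem_biUnion ⟨hψ, hψS⟩ hcψ))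
  · intro hcφ
    exact hc.2 (Or.inr (Or.inl hcφ))
  · intro ψ hψ hcψ
    exact hc.2 (Or.inr (Or.inr (Set.mem_biUnion (by exact_mod_cast hψ) hcψ)))

theorem chain_con (hcon : ¬ Thm S Δt) (hRes : Res.Infinite)
    (hdisj : ∀ c ∈ Res, c ∉ fvT S) :
    ∀ n, ¬ Thm (chain S Δt V' Res enum n) Δt := by
  intro n
  induction n with
  | zero => exact hcon
  | succ n ih =>
    rcases chain_succ_eq S Δt V' Res enum n with ⟨hcan, heq⟩ | ⟨_, heq⟩
    · rw [heq]
      intro hthm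
      by_cases hex : ∃ body, enum n = IFormula.ex body
      · obtain ⟨body, hb⟩ := hex
        set T := chain S Δt V' Res enum n
        set c := freshC Δt Res T (enum n) with hc
        have spec : FreshP Δt Res T (enum n) c :=
          freshC_spec Δt Res (fresh_exists S Δt V' Res enum hRes hdisj n (enum n))
        have hwit : wit Δt Res T (enum n) = {openF body (Term.var c)} :=
          (wit_subsingleton Δt Res T (enum n)).eq_singleton_of_mem ⟨body, hb, rfl⟩
        obtain ⟨G, hG, hd⟩ := hthm
        set w := openF body (Term.var c) with hw
        set Γ₀ : Finset (IFormula L ℕ) := insert (enum n) (G.erase w) with hΓ₀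
        have hGsub : G ⊆ insert w Γ₀ := by
          intro x hx
          by_cases hxw : x = w
          · subst hxw; exact Finset.mem_insert_self _ _
          · exact Finset.mem_insert_of_mem
              (Finset.mem_insert_of_mem (Finset.mem_erase.2 ⟨hxw, hx⟩))
        have d' : LJm L true (insert w Γ₀) Δt := weaken hd hGsub (le_refl _)
        have hΓ₀sub : (↑Γ₀ : Set (IFormula L ℕ)) ⊆ insert (enum n) T := by
          intro x hx
          rcases Finset.mem_insert.1 (by exact_mod_cast hx) with rfl | hx
          · exact Set.mem_insert _ _
          · have hx' := hG (Finset.mem_of_mem_erase hx)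
            rcases hx' with (hx' | hx') | hx'
            · exact Set.mem_insert_of_mem _ hx'
            · rcases hx' with rfl; exact Set.mem_insert _ _
            · rw [hwit] at hx'
              exact absurd hx' (Finset.ne_of_mem_erase hx)
        have hexmem : IFormula.ex body ∈ Γ₀ := by
          rw [← hb]; exact Finset.mem_insert_self _ _
        have hfvΓ₀ : ∀ ψ ∈ Γ₀, c ∉ fvF ψ := by
          intro ψ hψ
          have hψ' := hΓ₀sub (by exact_mod_cast hψ)
          rcases hψ' with rfl | hψ'
          · exact spec.2.2.1
          · exact spec.2.1 ψ hψ'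
        have hfvΔt : ∀ ψ ∈ Δt, c ∉ fvF ψ := spec.2.2.2
        have dfin : LJm L true Γ₀ Δt := LJm.exL hexmem hfvΓ₀ hfvΔt d'
        exact hcan.2 ⟨Γ₀, hΓ₀sub, dfin⟩
      · rw [wit_empty Δt Res (fun body hbody => hex ⟨body, hbody⟩), Set.union_empty,
          Set.union_singleton] at hthm
        exact hcan.2 hthm
    · rw [heq]; exact ih

end Lind2

/-- prime, saturated, consistent theories (worlds of the canonical model) -/
structure IsWorld (fsym : ℕ → Option (Σ n, L.Functions n))
    (rsym : ℕ → Option (Σ n, L.Relations n)) (V : Set ℕ) (T : Set (IFormula L ℕ)) : Prop where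
  zero : 0 ∈ V
  coinf : (Vᶜ : Set ℕ).Infinite
  good : T ⊆ Good fsym rsym
  fv : ∀ φ ∈ T, fvF φ ⊆ V
  con : ¬ Thm T ∅
  closed : ∀ φ ∈ Good fsym rsym, fvF φ ⊆ V → Thm T {φ} → φ ∈ T
  prime : ∀ a b : IFormula L ℕ, a.disj b ∈ T → a ∈ T ∨ b ∈ T
  henkin : ∀ ψ : IFormula L (Option ℕ), IFormula.ex ψ ∈ T →
    ∃ c ∈ V, openF ψ (Term.var c) ∈ T

/-- The Lindenbaum construction: extend a consistent set to a world. -/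
theorem lindenbaum (enum : ℕ → IFormula L ℕ)
    (henum : ∀ φ ∈ Good fsym rsym, ∃ n, enum n = φ)
    (hgenum : ∀ n, enum n ∈ Good fsym rsym)
    (V E : Set ℕ) (S : Set (IFormula L ℕ)) (Δt : Finset (IFormula L ℕ))
    (hV0 : 0 ∈ V) (hVEc : ((V ∪ E)ᶜ : Set ℕ).Infinite)
    (hSg : S ⊆ Good fsym rsym) (hSfv : ∀ φ ∈ S, fvF φ ⊆ V ∪ E)
    (hcon : ¬ Thm S Δt) :
    ∃ V' T', IsWorld fsym rsym V' T' ∧ V ∪ E ⊆ V' ∧ S ⊆ T' ∧ ¬ Thm T' Δt := by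
  classical
  set B : Set ℕ := V ∪ E with hB
  have g : ℕ ↪ ↥(Bᶜ) := hVEc.natEmbedding
  set Res : Set ℕ := Set.range (fun k => (g (2 * k) : ℕ)) with hRes
  set V' : Set ℕ := B ∪ Res with hV'
  have hResB : Res ⊆ Bᶜ := by
    rintro x ⟨k, rfl⟩
    exact (g (2 * k)).2
  have hResInf : Res.Infinite := by
    apply Set.infinite_range_of_injective
    intro k1 k2 hk
    have := g.injective (Subtype.ext hk)
    omega
  have hV'c : (V'ᶜ : Set ℕ).Infinite := by
    have hsub : Set.range (fun k => (g (2 * k + 1) : ℕ)) ⊆ V'ᶜ := by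
      rintro x ⟨k, rfl⟩
      intro hx
      rcases hx with hx | hx
      · exact (g (2 * k + 1)).2 hx
      · obtain ⟨m, hm⟩ := hx
        have := g.injective (Subtype.ext hm)
        omega
    refine Set.Infinite.mono hsub ?_
    apply Set.infinite_range_of_injective
    intro k1 k2 hk
    have := g.injective (Subtype.ext hk)
    omega
  have hdisj : ∀ c ∈ Res, c ∉ fvT S := by
    intro c hc hcS
    obtain ⟨s, hs⟩ := Set.mem_iUnion.1 hcS
    simp only [Set.mem_iUnion] at hs
    obtain ⟨hsS, hcs⟩ := hs
    exact hResB hc (hSfv s hsS hcs)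
  have hRV' : Res ⊆ V' := Set.subset_union_right
  have h0V' : (0 : ℕ) ∈ V' := Or.inl (Or.inl hV0)
  have hSfv' : ∀ φ ∈ S, fvF φ ⊆ V' := fun φ hφ => (hSfv φ hφ).trans Set.subset_union_left
  set T' : Set (IFormula L ℕ) := ⋃ n, chain S Δt V' Res enum n with hT'
  have hchainT' : ∀ n, chain S Δt V' Res enum n ⊆ T' := fun n => Set.subset_iUnion _ n
  have hST' : S ⊆ T' := hchainT' 0
  have hinv := chain_inv S Δt V' Res enum hSg hSfv' hgenum hRV' h0V'
  have hconn := chain_con S Δt V' Res enum hcon hResInf hdisj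
  have hnthm : ¬ Thm T' Δt := by
    rintro ⟨G, hG, hd⟩
    obtain ⟨n, hn⟩ := finset_subset_chain (chain_mono S Δt V' Res enum) G hG
    exact hconn n ⟨G, hn, hd⟩
  have hgoodT' : ∀ φ ∈ T', φ ∈ Good fsym rsym ∧ fvF φ ⊆ V' := by
    intro φ hφ
    obtain ⟨n, hn⟩ := Set.mem_iUnion.1 hφ
    exact hinv n φ hn
  -- the stage dichotomy for arbitrary good formulas
  have hstage : ∀ φ, φ ∈ Good fsym rsym → fvF φ ⊆ V' →
      φ ∉ T' → Thm (insert φ T') Δt := by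
    intro φ hφg hφfv hφn
    obtain ⟨n, hn⟩ := henum φ hφg
    rcases chain_succ_eq S Δt V' Res enum n with ⟨hcan, heq⟩ | ⟨hncan, heq⟩
    · exfalso
      apply hφn
      apply hchainT' (n + 1)
      rw [heq, ← hn]
      exact Or.inl (Or.inr rfl)
    · rw [hn] at hncan
      push_neg at hncan
      exact Thm.mono (hncan hφfv) (Set.insert_subset_insert (hchainT' n))
  refine ⟨V', T', ⟨?_, ?_, ?_, ?_, ?_, ?_, ?_, ?_⟩, Set.subset_union_left, hST', hnthm⟩
  · exact h0V'
  · exact hV'c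
  · exact fun φ hφ => (hgoodT' φ hφ).1
  · exact fun φ hφ => (hgoodT' φ hφ).2
  · intro hc
    exact hnthm (hc.weakΔ (Finset.empty_subset _))
  · -- closed
    intro φ hφg hφfv hthm
    by_contra hφn
    exact hnthm (Thm.cut hthm (hstage φ hφg hφfv hφn))
  · -- prime
    intro a b hab
    by_contra hcon'
    push_neg at hcon'
    obtain ⟨han, hbn⟩ := hcon'
    have habg := hgoodT' _ hab
    have hag := good_disj_inv habg.1
    have hfvab : fvF (a.disj b) = fvF a ∪ fvF b := rfl
    have hafv : fvF a ⊆ V' := by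
      intro x hx; exact habg.2 (by rw [hfvab]; exact Or.inl hx)
    have hbfv : fvF b ⊆ V' := by
      intro x hx; exact habg.2 (by rw [hfvab]; exact Or.inr hx)
    have hta := hstage a hag.1 hafv han
    have htb := hstage b hag.2 hbfv hbn
    obtain ⟨G₁, hG₁, hd₁⟩ := hta
    obtain ⟨G₂, hG₂, hd₂⟩ := htb
    set G : Finset (IFormula L ℕ) := insert (a.disj b) ((G₁.erase a) ∪ (G₂.erase b)) with hG
    have hGsub : (↑G : Set (IFormula L ℕ)) ⊆ T' := by
      intro x hx
      rcases Finset.mem_insert.1 (by exact_mod_cast hx) with rfl | hx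
      · exact hab
      rcases Finset.mem_union.1 hx with hx | hx
      · rcases hG₁ (Finset.mem_of_mem_erase hx) with h | h
        · exact absurd h (Finset.ne_of_mem_erase hx)
        · exact h
      · rcases hG₂ (Finset.mem_of_mem_erase hx) with h | h
        · exact absurd h (Finset.ne_of_mem_erase hx)
        · exact h
    have hda : LJm L true (insert a G) Δt := by
      refine weaken hd₁ ?_ (le_refl _)
      intro x hx
      by_cases hxa : x = a
      · subst hxa; exact Finset.mem_insert_self _ _
      · exact Finset.mem_insert_of_mem (Finset.mem_insert_of_mem
          (Finset.mem_union_left _ (Finset.mem_erase.2 ⟨hxa, hx⟩)))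
    have hdb : LJm L true (insert b G) Δt := by
      refine weaken hd₂ ?_ (le_refl _)
      intro x hx
      by_cases hxb : x = b
      · subst hxb; exact Finset.mem_insert_self _ _
      · exact Finset.mem_insert_of_mem (Finset.mem_insert_of_mem
          (Finset.mem_union_right _ (Finset.mem_erase.2 ⟨hxb, hx⟩)))
    have hd : LJm L true G Δt := LJm.disjL (Finset.mem_insert_self _ _) hda hdb
    exact hnthm ⟨G, hGsub, hd⟩
  · -- henkin
    intro ψ hψ
    obtain ⟨n, hn⟩ := henum _ (hgoodT' _ hψ).1
    rcases chain_succ_eq S Δt V' Res enum n with ⟨hcan, heq⟩ | ⟨hncan, heq⟩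
    · set c := freshC Δt Res (chain S Δt V' Res enum n) (enum n) with hc
      refine ⟨c, freshC_mem Δt V' Res hRV' h0V' _ _, ?_⟩
      apply hchainT' (n + 1)
      rw [heq]
      refine Or.inr ⟨ψ, hn, rfl⟩
    · exfalso
      rw [hn] at hncan
      push_neg at hncan
      have hthm := hncan ((hgoodT' _ hψ).2)
      exact hnthm (by
        have := Thm.mono hthm (Set.insert_subset_insert (hchainT' n))
        rwa [Set.insert_eq_self.2 hψ] at this)
  
end Compl

namespace Compl
open FirstOrder Language

variable {L : FirstOrder.Language.{u, v}}

section Model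

variable (fsym : ℕ → Option (Σ n, L.Functions n)) (rsym : ℕ → Option (Σ n, L.Relations n))
variable (enum : ℕ → IFormula L ℕ)

/-- worlds, coded as pairs of sets of naturals -/
def WT : Type := {p : Set ℕ × Set ℕ // IsWorld fsym rsym p.1 (enum '' p.2)}

/-- domain carrier: small terms -/
def XX : Type := (L0 (L := L) fsym rsym).Term ℕ

attribute [reducible] XX

variable {fsym rsym enum}

def Vof (w : WT fsym rsym enum) : Set ℕ := w.1.1

def Tof (w : WT fsym rsym enum) : Set (IFormula L ℕ) := enum '' w.1.2

theorem isWorld_of (w : WT fsym rsym enum) : IsWorld fsym rsym (Vof w) (Tof w) := w.2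

def Dof (w : WT fsym rsym enum) : Set (XX fsym rsym) := {x | tmFv (upT x) ⊆ Vof w}

def leW (w w' : WT fsym rsym enum) : Prop := Vof w ⊆ Vof w' ∧ Tof w ⊆ Tof w'

open Classical in
noncomputable def fMap {n : ℕ} (f : L.Functions n) (xs : Fin n → XX fsym rsym) :
    XX fsym rsym :=
  if h : ∃ f₀ : (L0 (L := L) fsym rsym).Functions n, symF f₀ = f
  then Term.func h.choose xs else Term.var 0

def rMap {n : ℕ} (w : WT fsym rsym enum) (R : L.Relations n) (xs : Fin n → XX fsym rsym) :
    Prop :=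
  IFormula.rel R (fun i => upT (xs i)) ∈ Tof w

theorem upT_fMap {n : ℕ} (f₀ : (L0 (L := L) fsym rsym).Functions n)
    (xs : Fin n → XX fsym rsym) :
    upT (fMap (symF f₀) xs) = Term.func (symF f₀) (fun i => upT (xs i)) := by
  rw [fMap, dif_pos ⟨f₀, rfl⟩]
  show Term.func (symF (Exists.choose _)) (fun i => upT (xs i)) = _
  rw [Exists.choose_spec (⟨f₀, rfl⟩ : ∃ g : (L0 (L := L) fsym rsym).Functions n, symF g = symF f₀)]

/-- The canonical Kripke model. -/
noncomputable def CM (w₀ : WT fsym rsym enum) : FKModel L where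
  W := WT fsym rsym enum
  ne := ⟨w₀⟩
  X := XX fsym rsym
  le := leW
  le_refl := fun w => ⟨le_refl _, le_refl _⟩
  le_trans := fun h1 h2 => ⟨h1.1.trans h2.1, h1.2.trans h2.2⟩
  D := Dof
  D_ne := fun w => ⟨Term.var 0, by
    show tmFv (upT (Term.var 0 : (L0 (L := L) fsym rsym).Term ℕ)) ⊆ Vof w
    intro x hx
    simp only [upT, tmFv, Set.mem_singleton_iff] at hx
    subst hx
    exact (isWorld_of w).zero⟩
  D_mono := fun hle x hx => hx.trans hle.1
  funMap := fun _ f xs => fMap f xs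
  funMap_mem := by
    intro n w f xs hxs
    show tmFv (upT (fMap f xs)) ⊆ Vof w
    rw [fMap]
    split
    · next h =>
      show tmFv (upT (Term.func _ xs)) ⊆ Vof w
      show tmFv (Term.func (symF _) fun i => upT (xs i)) ⊆ Vof w
      intro x hx
      simp only [tmFv, Set.mem_iUnion] at hx
      obtain ⟨i, hi⟩ := hx
      exact hxs i hi
    · show tmFv (upT (Term.var 0 : (L0 (L := L) fsym rsym).Term ℕ)) ⊆ Vof w
      intro x hx
      simp only [upT, tmFv, Set.mem_singleton_iff] at hx
      subst hx
      exact (isWorld_of w).zero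
  funMap_mono := fun _ _ _ _ => rfl
  RelMap := rMap
  RelMap_dom := by
    intro n w R xs h i
    show tmFv (upT (xs i)) ⊆ Vof w
    have hfv := (isWorld_of w).fv _ h
    intro x hx
    apply hfv
    show x ∈ ⋃ j, tmFv (upT (xs j))
    exact Set.mem_iUnion.2 ⟨i, hx⟩
  RelMap_mono := fun _ _ hle h => hle.2 h

theorem tval_up (w₀ w : WT fsym rsym enum) {α : Type} (vv : α → XX fsym rsym)
    (u : (L0 (L := L) fsym rsym).Term α) :
    upT ((CM w₀).tval w vv (upT u)) = upT (u.subst vv) := by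
  induction u with
  | var a => rfl
  | func f₀ ts ih =>
    show upT ((CM w₀).tval w vv (Term.func (symF f₀) fun i => upT (ts i))) = _
    show upT (fMap (symF f₀) (fun i => (CM w₀).tval w vv (upT (ts i)))) = _
    erw [upT_fMap]
    show _ = upT (Term.func f₀ fun i => (ts i).subst vv)
    show _ = Term.func (symF f₀) (fun i => upT ((ts i).subst vv))
    exact congrArg _ (funext fun i => ih i)

theorem substGood (w : WT fsym rsym enum) {α : Type}
    (φ₀ : IFormula (L0 (L := L) fsym rsym) α) (vv : α → XX fsym rsym)
    (hvv : ∀ a, vv a ∈ Dof w) :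
    upF (φ₀.substF vv) ∈ Good fsym rsym ∧ fvF (upF (φ₀.substF vv)) ⊆ Vof w := by
  refine ⟨⟨_, rfl⟩, ?_⟩
  rw [fvF_upF, fvF_substF]
  intro x hx
  simp only [Set.mem_iUnion] at hx
  obtain ⟨a, _, hx⟩ := hx
  have := hvv a
  rw [← tmFv_upT (vv a)] at hx
  exact this hx

/-- make a world from the Lindenbaum output -/
def mkW (V : Set ℕ) (T : Set (IFormula L ℕ)) (h : IsWorld fsym rsym V T)
    (hT : T ⊆ Set.range enum) : WT fsym rsym enum :=
  ⟨(V, enum ⁻¹' T), by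
    show IsWorld fsym rsym V (enum '' (enum ⁻¹' T))
    rwa [Set.image_preimage_eq_of_subset hT]⟩

theorem Tof_mkW (V : Set ℕ) (T : Set (IFormula L ℕ)) (h : IsWorld fsym rsym V T)
    (hT : T ⊆ Set.range enum) : Tof (mkW V T h hT) = T := by
  show enum '' (enum ⁻¹' T) = T
  exact Set.image_preimage_eq_of_subset hT

theorem Vof_mkW (V : Set ℕ) (T : Set (IFormula L ℕ)) (h : IsWorld fsym rsym V T)
    (hT : T ⊆ Set.range enum) : Vof (mkW V T h hT) = V := rfl

end Model

end Compl

namespace Compl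
open FirstOrder Language

variable {L : FirstOrder.Language.{u, v}}
variable {fsym : ℕ → Option (Σ n, L.Functions n)} {rsym : ℕ → Option (Σ n, L.Relations n)}
variable {enum : ℕ → IFormula L ℕ}

theorem mem_of_thm (w : WT fsym rsym enum) {α : Type}
    (φ₀ : IFormula (L0 (L := L) fsym rsym) α) (vv : α → XX fsym rsym)
    (hvv : ∀ a, vv a ∈ Dof w) (h : Thm (Tof w) {upF (φ₀.substF vv)}) :
    upF (φ₀.substF vv) ∈ Tof w :=
  (isWorld_of w).closed _ (substGood w φ₀ vv hvv).1 (substGood w φ₀ vv hvv).2 h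

/-- The truth lemma for the canonical model. -/
theorem truth (w₀ : WT fsym rsym enum)
    (henum : ∀ φ ∈ Good fsym rsym, ∃ n, enum n = φ)
    (hgenum : ∀ n, enum n ∈ Good fsym rsym) :
    ∀ {α : Type} (φ₀ : IFormula (L0 (L := L) fsym rsym) α) (w : WT fsym rsym enum)
      (vv : α → XX fsym rsym), (∀ a, vv a ∈ Dof w) →
      ((CM w₀).Force w vv (upF φ₀) ↔ upF (φ₀.substF vv) ∈ Tof w) := by
  have hGR : Good fsym rsym ⊆ Set.range enum := by
    intro φ hφ
    obtain ⟨n, hn⟩ := henum φ hφ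
    exact ⟨n, hn⟩
  intro α φ₀
  induction φ₀ with
  | falsum =>
    intro w vv hvv
    show False ↔ IFormula.falsum ∈ Tof w
    simp only [false_iff]
    intro hmem
    refine (isWorld_of w).con ⟨{IFormula.falsum}, by simpa using hmem, ?_⟩
    exact LJm.axBot (Finset.mem_singleton_self _)
  | rel R₀ ts =>
    intro w vv hvv
    show rMap w (symR R₀) (fun i => (CM w₀).tval w vv (upT (ts i))) ↔ _
    unfold rMap
    have hfn : (fun i => upT ((CM w₀).tval w vv (upT (ts i))))
        = fun i => upT ((ts i).subst vv) := funext fun i => tval_up w₀ w vv (ts i)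
    constructor
    · intro h
      have : IFormula.rel (symR R₀) (fun i => upT ((CM w₀).tval w vv (upT (ts i)))) ∈ Tof w := h
      rwa [hfn] at this
    · intro h
      show IFormula.rel (symR R₀) (fun i => upT ((CM w₀).tval w vv (upT (ts i)))) ∈ Tof w
      rwa [hfn]
  | disj a b iha ihb =>
    intro w vv hvv
    show ((CM w₀).Force w vv (upF a) ∨ (CM w₀).Force w vv (upF b)) ↔ _
    rw [iha w vv hvv, ihb w vv hvv]
    constructor
    · rintro (h | h)
      · apply mem_of_thm w (a.disj b) vv hvv
        refine ⟨{upF (a.substF vv)}, by simpa using h, ?_⟩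
        refine LJm.disjR (a := upF (a.substF vv)) (b := upF (b.substF vv))
          (Finset.mem_singleton_self _) ?_
        exact identity' (Finset.mem_singleton_self _) (Finset.mem_insert_self _ _)
      · apply mem_of_thm w (a.disj b) vv hvv
        refine ⟨{upF (b.substF vv)}, by simpa using h, ?_⟩
        refine LJm.disjR (a := upF (a.substF vv)) (b := upF (b.substF vv))
          (Finset.mem_singleton_self _) ?_
        exact identity' (Finset.mem_singleton_self _)
          (Finset.mem_insert_of_mem (Finset.mem_insert_self _ _))
    · intro h
      exact (isWorld_of w).prime _ _ h
  | conj a b iha ihb =>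
    intro w vv hvv
    show ((CM w₀).Force w vv (upF a) ∧ (CM w₀).Force w vv (upF b)) ↔ _
    rw [iha w vv hvv, ihb w vv hvv]
    constructor
    · rintro ⟨ha, hb⟩
      apply mem_of_thm w (a.conj b) vv hvv
      refine ⟨{upF (a.substF vv), upF (b.substF vv)}, ?_, ?_⟩
      · intro x hx
        rcases Finset.mem_insert.1 (by exact_mod_cast hx) with rfl | hx
        · exact ha
        · rcases Finset.mem_singleton.1 hx with rfl
          exact hb
      · refine LJm.conjR (a := upF (a.substF vv)) (b := upF (b.substF vv))
          (Finset.mem_singleton_self _) ?_ ?_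
        · exact identity' (Finset.mem_insert_self _ _) (Finset.mem_insert_self _ _)
        · exact identity' (Finset.mem_insert_of_mem (Finset.mem_singleton_self _))
            (Finset.mem_insert_self _ _)
    · intro h
      constructor
      · apply mem_of_thm w a vv hvv
        refine ⟨{upF ((a.conj b).substF vv)}, by simpa using h, ?_⟩
        refine LJm.conjL (a := upF (a.substF vv)) (b := upF (b.substF vv))
          (Finset.mem_singleton_self _) ?_
        exact identity' (Finset.mem_insert_self _ _) (Finset.mem_singleton_self _)
      · apply mem_of_thm w b vv hvv
        refine ⟨{upF ((a.conj b).substF vv)}, by simpa using h, ?_⟩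
        refine LJm.conjL (a := upF (a.substF vv)) (b := upF (b.substF vv))
          (Finset.mem_singleton_self _) ?_
        exact identity' (Finset.mem_insert_of_mem (Finset.mem_insert_self _ _))
          (Finset.mem_singleton_self _)
  | impl a b iha ihb =>
    intro w vv hvv
    show (∀ u, leW w u → (CM w₀).Force u vv (upF a) → (CM w₀).Force u vv (upF b)) ↔ _
    constructor
    · intro hf
      by_contra hmem
      -- (a → b)σ is not derivable from Tof w
      have hnthm : ¬ Thm (Tof w) {upF ((a.impl b).substF vv)} := by
        intro hthm
        exact hmem (mem_of_thm w (a.impl b) vv hvv hthm)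
      -- T w + aσ does not derive bσ
      have hncon : ¬ Thm (insert (upF (a.substF vv)) (Tof w)) {upF (b.substF vv)} := by
        rintro ⟨G, hG, hd⟩
        apply hnthm
        refine ⟨G.erase (upF (a.substF vv)), ?_, ?_⟩
        · intro x hx
          have hx' := hG (Finset.mem_of_mem_erase (by exact_mod_cast hx))
          rcases hx' with h | h
          · exact absurd h (Finset.ne_of_mem_erase (by exact_mod_cast hx))
          · exact h
        · refine LJm.implR (a := upF (a.substF vv)) (b := upF (b.substF vv))
            (Finset.mem_singleton_self _) ?_
          refine weaken hd ?_ (le_refl _)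
          intro x hx
          by_cases hxa : x = upF (a.substF vv)
          · subst hxa; exact Finset.mem_insert_self _ _
          · exact Finset.mem_insert_of_mem (Finset.mem_erase.2 ⟨hxa, hx⟩)
      -- extend to a world
      obtain ⟨V'', T'', hW, hVsub, hSsub, hnthm''⟩ :=
        lindenbaum enum henum hgenum (Vof w) ∅ (insert (upF (a.substF vv)) (Tof w))
          {upF (b.substF vv)} (isWorld_of w).zero
          (by rw [Set.union_empty]; exact (isWorld_of w).coinf)
          (by
            intro x hx
            rcases hx with rfl | hx
            · exact (substGood w a vv hvv).1
            · exact (isWorld_of w).good hx)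
          (by
            intro x hx
            rw [Set.union_empty]
            rcases hx with rfl | hx
            · exact (substGood w a vv hvv).2
            · exact (isWorld_of w).fv x hx)
          hncon
      set u : WT fsym rsym enum := mkW V'' T'' hW (hW.good.trans hGR) with hu
      have hTu : Tof u = T'' := Tof_mkW _ _ _ _
      have hle : leW w u := by
        constructor
        · show Vof w ⊆ Vof u
          rw [hu, Vof_mkW]
          exact (Set.subset_union_left).trans hVsub
        · show Tof w ⊆ Tof u
          rw [hTu]
          exact (Set.subset_insert _ _).trans hSsub
      have hvvu : ∀ x, vv x ∈ Dof u := fun x => (hvv x).trans hle.1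
      have hFa : (CM w₀).Force u vv (upF a) := by
        rw [iha u vv hvvu, hTu]
        exact hSsub (Set.mem_insert _ _)
      have hFb := hf u hle hFa
      rw [ihb u vv hvvu, hTu] at hFb
      exact hnthm'' (Thm.mem hFb (Finset.mem_singleton_self _))
    · intro hmem u hle hFa
      rw [iha u vv (fun x => (hvv x).trans hle.1)] at hFa
      rw [ihb u vv (fun x => (hvv x).trans hle.1)]
      apply mem_of_thm u b vv (fun x => (hvv x).trans hle.1)
      refine ⟨{upF ((a.impl b).substF vv), upF (a.substF vv)}, ?_, ?_⟩
      · intro x hx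
        rcases Finset.mem_insert.1 (by exact_mod_cast hx) with rfl | hx
        · exact hle.2 hmem
        · rcases Finset.mem_singleton.1 hx with rfl
          exact hFa
      · refine LJm.implL (a := upF (a.substF vv)) (b := upF (b.substF vv))
          (Finset.mem_insert_self _ _) ?_ ?_
        · exact identity' (Finset.mem_insert_of_mem (Finset.mem_singleton_self _))
            (Finset.mem_insert_self _ _)
        · exact identity' (Finset.mem_insert_self _ _) (Finset.mem_singleton_self _)
  | ex φ ih =>
    intro w vv hvv
    show (∃ c ∈ Dof w, (CM w₀).Force w (fun o => Option.elim o c vv) (upF φ)) ↔ _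
    constructor
    · rintro ⟨x, hx, hf⟩
      erw [ih w (fun o => Option.elim o x vv) (by rintro (_ | a); exacts [hx, hvv a])] at hf
      apply mem_of_thm w (IFormula.ex φ) vv hvv
      refine ⟨{upF (φ.substF (fun o => Option.elim o x vv))}, by simpa using hf, ?_⟩
      refine LJm.exR (φ := upF (φ.substF (sLift vv))) (upT x) (Finset.mem_singleton_self _) ?_
      have hkey : upF (φ.substF (fun o => Option.elim o x vv))
          = openF (upF (φ.substF (sLift vv))) (upT x) := by
        rw [← openF_substF_lift φ vv x, upF_openF]
      rw [← hkey]
      exact identity' (Finset.mem_singleton_self _) (Finset.mem_insert_self _ _)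
    · intro hmem
      obtain ⟨c, hcV, hcT⟩ := (isWorld_of w).henkin (upF (φ.substF (sLift vv))) hmem
      set x : XX fsym rsym := Term.var c with hxdef
      have hxD : x ∈ Dof w := by
        show tmFv (upT (Term.var c : (L0 (L := L) fsym rsym).Term ℕ)) ⊆ Vof w
        intro y hy
        simp only [upT, tmFv, Set.mem_singleton_iff] at hy
        subst hy
        exact hcV
      refine ⟨x, hxD, ?_⟩
      erw [ih w (fun o => Option.elim o x vv) (by rintro (_ | a); exacts [hxD, hvv a])]
      have hkey : upF (φ.substF (fun o => Option.elim o x vv))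
          = openF (upF (φ.substF (sLift vv))) (Term.var c) := by
        rw [← openF_substF_lift φ vv x, upF_openF]
        rfl
      rw [hkey]
      exact hcT
  | all φ ih =>
    intro w vv hvv
    show (∀ u, leW w u → ∀ c ∈ Dof u, (CM w₀).Force u (fun o => Option.elim o c vv) (upF φ)) ↔ _
    constructor
    · intro hf
      by_contra hmem
      have hnthm : ¬ Thm (Tof w) {upF ((IFormula.all φ).substF vv)} := by
        intro hthm
        exact hmem (mem_of_thm w (IFormula.all φ) vv hvv hthm)
      -- pick a fresh variable
      obtain ⟨aa, haa⟩ := (isWorld_of w).coinf.nonempty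
      set Ψ : IFormula L (Option ℕ) := upF (φ.substF (sLift vv)) with hΨ
      have hfvΨ : fvF (IFormula.ex Ψ) ⊆ Vof w := by
        have h1 := (substGood w (IFormula.ex φ) vv hvv).2
        exact h1
      have hncon : ¬ Thm (Tof w) {openF Ψ (Term.var aa)} := by
        rintro ⟨G, hG, hd⟩
        apply hnthm
        refine ⟨G, hG, ?_⟩
        refine LJm.allR (φ := Ψ) (a := aa) (Finset.mem_singleton_self _) ?_ ?_ hd
        · intro ψ hψ hfv
          exact haa ((isWorld_of w).fv ψ (hG hψ) hfv)
        · intro ψ hψ hfv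
          rcases Finset.mem_singleton.1 hψ with rfl
          have : fvF (IFormula.all Ψ) ⊆ Vof w := by
            have h1 := (substGood w (IFormula.all φ) vv hvv).2
            exact h1
          exact haa (this hfv)
      obtain ⟨V'', T'', hW, hVsub, hSsub, hnthm''⟩ :=
        lindenbaum enum henum hgenum (Vof w) {aa} (Tof w)
          {openF Ψ (Term.var aa)} (isWorld_of w).zero
          (by
            have h1 : ((Vof w ∪ {aa})ᶜ : Set ℕ) = (Vof w)ᶜ \ {aa} := by
              rw [Set.compl_union]
              rfl
            rw [h1]
            exact (isWorld_of w).coinf.diff (Set.finite_singleton _))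
          (isWorld_of w).good
          (fun x hx => ((isWorld_of w).fv x hx).trans Set.subset_union_left)
          hncon
      set u : WT fsym rsym enum := mkW V'' T'' hW (hW.good.trans hGR) with hu
      have hTu : Tof u = T'' := Tof_mkW _ _ _ _
      have hle : leW w u := by
        constructor
        · show Vof w ⊆ Vof u
          rw [hu, Vof_mkW]
          exact (Set.subset_union_left).trans hVsub
        · show Tof w ⊆ Tof u
          rw [hTu]
          exact hSsub
      set x : XX fsym rsym := Term.var aa with hxdef
      have hxD : x ∈ Dof u := by
        show tmFv (upT (Term.var aa : (L0 (L := L) fsym rsym).Term ℕ)) ⊆ Vof u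
        intro y hy
        simp only [upT, tmFv, Set.mem_singleton_iff] at hy
        subst hy
        rw [hu, Vof_mkW]
        exact hVsub (Or.inr rfl)
      have hF := hf u hle x hxD
      erw [ih u (fun o => Option.elim o x vv) (by
        rintro (_ | a)
        · exact hxD
        · exact (hvv a).trans hle.1)] at hF
      have hkey : upF (φ.substF (fun o => Option.elim o x vv))
          = openF Ψ (Term.var aa) := by
        rw [hΨ, ← openF_substF_lift φ vv x, upF_openF]
        rfl
      rw [hkey, hTu] at hF
      exact hnthm'' (Thm.mem hF (Finset.mem_singleton_self _))
    · intro hmem u hle x hxD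
      have hvvu : ∀ o, (fun o => Option.elim o x vv) o ∈ Dof u := by
        rintro (_ | a)
        · exact hxD
        · exact (hvv a).trans hle.1
      erw [ih u (fun o => Option.elim o x vv) hvvu]
      apply mem_of_thm u φ (fun o => Option.elim o x vv) hvvu
      refine ⟨{upF ((IFormula.all φ).substF vv)}, by simpa using hle.2 hmem, ?_⟩
      refine LJm.allL (φ := upF (φ.substF (sLift vv))) (upT x) (Finset.mem_singleton_self _) ?_
      have hkey : upF (φ.substF (fun o => Option.elim o x vv))
          = openF (upF (φ.substF (sLift vv))) (upT x) := by
        rw [← openF_substF_lift φ vv x, upF_openF]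
      rw [← hkey]
      exact identity' (Finset.mem_insert_self _ _) (Finset.mem_singleton_self _)

end Compl

namespace Compl
open FirstOrder Language

variable {L : FirstOrder.Language.{u, v}}

/-- function symbols of a term -/
def fST {α : Type} : L.Term α → Set (Σ n, L.Functions n)
  | .var _ => ∅
  | .func (l := n) f ts => insert ⟨n, f⟩ (⋃ i, fST (ts i))

/-- function symbols of a formula -/
def fSF : ∀ {α : Type}, IFormula L α → Set (Σ n, L.Functions n)
  | _, .falsum => ∅
  | _, .rel _ ts => ⋃ i, fST (ts i)
  | _, .disj a b => fSF a ∪ fSF b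
  | _, .conj a b => fSF a ∪ fSF b
  | _, .impl a b => fSF a ∪ fSF b
  | _, .ex φ => fSF φ
  | _, .all φ => fSF φ

/-- relation symbols of a formula -/
def rSF : ∀ {α : Type}, IFormula L α → Set (Σ n, L.Relations n)
  | _, .falsum => ∅
  | _, .rel (l := n) R _ => {⟨n, R⟩}
  | _, .disj a b => rSF a ∪ rSF b
  | _, .conj a b => rSF a ∪ rSF b
  | _, .impl a b => rSF a ∪ rSF b
  | _, .ex φ => rSF φ
  | _, .all φ => rSF φ

theorem fST_finite {α : Type} (t : L.Term α) : (fST t).Finite := by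
  induction t with
  | var a => exact Set.finite_empty
  | func f ts ih => exact ((Set.finite_iUnion ih).insert _)

theorem fSF_finite : ∀ {α : Type} (φ : IFormula L α), (fSF φ).Finite := by
  intro α φ
  induction φ with
  | falsum => exact Set.finite_empty
  | rel R ts => exact Set.finite_iUnion fun i => fST_finite _
  | disj a b iha ihb => exact iha.union ihb
  | conj a b iha ihb => exact iha.union ihb
  | impl a b iha ihb => exact iha.union ihb
  | ex φ ih => exact ih
  | all φ ih => exact ih

theorem rSF_finite : ∀ {α : Type} (φ : IFormula L α), (rSF φ).Finite := by
  intro α φ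
  induction φ with
  | falsum => exact Set.finite_empty
  | rel R ts => exact Set.finite_singleton _
  | disj a b iha ihb => exact iha.union ihb
  | conj a b iha ihb => exact iha.union ihb
  | impl a b iha ihb => exact iha.union ihb
  | ex φ ih => exact ih
  | all φ ih => exact ih

theorem enumOpt {β : Type*} (s : Set β) (hs : s.Countable) :
    ∃ f : ℕ → Option β, ∀ x ∈ s, ∃ i, f i = some x := by
  have hs' : (insert none (some '' s) : Set (Option β)).Countable :=
    (hs.image some).insert none
  obtain ⟨f, hf⟩ := Set.Countable.exists_eq_range hs' ⟨none, Set.mem_insert _ _⟩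
  refine ⟨f, ?_⟩
  intro x hx
  have : some x ∈ Set.range f := by
    rw [← hf]
    exact Set.mem_insert_of_mem _ ⟨x, hx, rfl⟩
  obtain ⟨i, hi⟩ := this
  exact ⟨i, hi⟩

section Final

variable {fsym : ℕ → Option (Σ n, L.Functions n)} {rsym : ℕ → Option (Σ n, L.Relations n)}

theorem goodT_of_syms {α : Type} (t : L.Term α)
    (hf : ∀ s ∈ fST t, ∃ i, fsym i = some s) : goodT (fsym := fsym) t := by
  induction t with
  | var a => trivial
  | @func n f ts ih =>
    refine ⟨hf ⟨n, f⟩ (Set.mem_insert _ _), fun j => ih j ?_⟩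
    intro s hs
    exact hf s (Set.mem_insert_of_mem _ (Set.mem_iUnion.2 ⟨j, hs⟩))

theorem goodF_of_syms : ∀ {α : Type} (φ : IFormula L α),
    (∀ s ∈ fSF φ, ∃ i, fsym i = some s) → (∀ s ∈ rSF φ, ∃ i, rsym i = some s) →
    goodF (fsym := fsym) rsym φ := by
  intro α φ
  induction φ with
  | falsum => intro _ _; trivial
  | @rel α n R ts =>
    intro hf hr
    refine ⟨hr ⟨n, R⟩ rfl, fun j => goodT_of_syms (ts j) ?_⟩
    intro s hs
    exact hf s (Set.mem_iUnion.2 ⟨j, hs⟩)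
  | disj a b iha ihb =>
    intro hf hr
    exact ⟨iha (fun s hs => hf s (Or.inl hs)) (fun s hs => hr s (Or.inl hs)),
           ihb (fun s hs => hf s (Or.inr hs)) (fun s hs => hr s (Or.inr hs))⟩
  | conj a b iha ihb =>
    intro hf hr
    exact ⟨iha (fun s hs => hf s (Or.inl hs)) (fun s hs => hr s (Or.inl hs)),
           ihb (fun s hs => hf s (Or.inr hs)) (fun s hs => hr s (Or.inr hs))⟩
  | impl a b iha ihb =>
    intro hf hr
    exact ⟨iha (fun s hs => hf s (Or.inl hs)) (fun s hs => hr s (Or.inl hs)),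
           ihb (fun s hs => hf s (Or.inr hs)) (fun s hs => hr s (Or.inr hs))⟩
  | ex φ ih => exact fun hf hr => ih hf hr
  | all φ ih => exact fun hf hr => ih hf hr

end Final

theorem main_complete {Γ Δ : Finset (IFormula L ℕ)} (h : FOValid L Γ Δ) :
    LJm L true Γ Δ := by
  classical
  by_contra hnd
  -- symbol enumerations
  obtain ⟨fsym, hfsym⟩ := enumOpt (⋃ φ ∈ (↑(Γ ∪ Δ) : Set (IFormula L ℕ)), fSF φ)
    ((Set.Finite.biUnion (Γ ∪ Δ).finite_toSet fun φ _ => fSF_finite φ).countable)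
  obtain ⟨rsym, hrsym⟩ := enumOpt (⋃ φ ∈ (↑(Γ ∪ Δ) : Set (IFormula L ℕ)), rSF φ)
    ((Set.Finite.biUnion (Γ ∪ Δ).finite_toSet fun φ _ => rSF_finite φ).countable)
  have hgoodΓΔ : ∀ φ ∈ Γ ∪ Δ, φ ∈ Good fsym rsym := by
    intro φ hφ
    have hg : goodF (fsym := fsym) rsym φ := by
      refine goodF_of_syms φ ?_ ?_
      · intro s hs
        exact hfsym s (Set.mem_biUnion (by exact_mod_cast hφ) hs)
      · intro s hs
        exact hrsym s (Set.mem_biUnion (by exact_mod_cast hφ) hs)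
    obtain ⟨ψ, hψ⟩ := goodF_surj φ hg
    exact ⟨ψ, hψ⟩
  -- enumeration of good formulas
  obtain ⟨enum, henumr⟩ := Set.Countable.exists_eq_range
    (Set.countable_range (upF (fsym := fsym) (rsym := rsym) (α := ℕ)))
    ⟨upF IFormula.falsum, ⟨IFormula.falsum, rfl⟩⟩
  have henum : ∀ φ ∈ Good fsym rsym, ∃ n, enum n = φ := by
    intro φ hφ
    have : φ ∈ Set.range enum := by rw [← henumr]; exact hφ
    obtain ⟨n, hn⟩ := this
    exact ⟨n, hn⟩
  have hgenum : ∀ n, enum n ∈ Good fsym rsym := by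
    intro n
    show enum n ∈ Good fsym rsym
    rw [show (Good fsym rsym : Set (IFormula L ℕ)) = Set.range enum from henumr]
    exact ⟨n, rfl⟩
  have hGR : Good fsym rsym ⊆ Set.range enum := by
    show Set.range upF ⊆ Set.range enum
    rw [henumr]
  -- root world
  set V₀ : Set ℕ := fvS (Γ ∪ Δ) ∪ {0} with hV₀
  have hV₀fin : V₀.Finite := (fvS_finite _).union (Set.finite_singleton _)
  have hrootcon : ¬ Thm (↑Γ : Set (IFormula L ℕ)) Δ := by
    rintro ⟨G, hG, hd⟩
    exact hnd (weaken hd (fun x hx => by exact_mod_cast hG hx) (le_refl _))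
  obtain ⟨V', T', hW, hVsub, hSsub, hnthm⟩ :=
    lindenbaum enum henum hgenum V₀ ∅ (↑Γ : Set (IFormula L ℕ)) Δ
      (Or.inr rfl)
      (by rw [Set.union_empty]; exact hV₀fin.infinite_compl)
      (fun φ hφ => hgoodΓΔ φ (Finset.mem_union_left _ (by exact_mod_cast hφ)))
      (by
        intro φ hφ
        rw [Set.union_empty]
        intro x hx
        exact Or.inl (Set.mem_biUnion
          (by exact_mod_cast Finset.mem_union_left Δ (by exact_mod_cast hφ)) hx))
      hrootcon
  set w : WT fsym rsym enum := mkW V' T' hW (hW.good.trans hGR) with hw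
  have hTw : Tof w = T' := Tof_mkW _ _ _ _
  have hVw : Vof w = V' := rfl
  -- the assignment
  set vv₀ : ℕ → XX fsym rsym := fun n => if n ∈ V' then Term.var n else Term.var 0 with hvv₀
  have hvv₀pos : ∀ n, n ∈ V' → vv₀ n = Term.var n := by
    intro n hn
    simp only [hvv₀]
    rw [if_pos hn]
  have hvv₀neg : ∀ n, n ∉ V' → vv₀ n = Term.var 0 := by
    intro n hn
    simp only [hvv₀]
    rw [if_neg hn]
  have hvvD : ∀ n, vv₀ n ∈ Dof w := by
    intro n
    show tmFv (upT (vv₀ n)) ⊆ Vof w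
    by_cases hn : n ∈ V'
    · rw [hvv₀pos n hn]
      intro x hx
      simp only [upT, tmFv, Set.mem_singleton_iff] at hx
      subst hx
      exact hn
    · rw [hvv₀neg n hn]
      intro x hx
      simp only [upT, tmFv, Set.mem_singleton_iff] at hx
      subst hx
      exact hW.zero
  -- forcing transfer: for φ ∈ Γ ∪ Δ, Force ↔ membership in T'
  have hForce : ∀ φ ∈ Γ ∪ Δ, ((CM w).Force w vv₀ φ ↔ φ ∈ T') := by
    intro φ hφ
    obtain ⟨φ₀, hφ₀⟩ := hgoodΓΔ φ hφ
    have hfvφ : fvF φ ⊆ V' := by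
      intro x hx
      apply hVsub
      exact Or.inl (Or.inl (Set.mem_biUnion (by exact_mod_cast hφ) hx))
    have hsub : upF (φ₀.substF (fun a => Term.var a)) = φ := by
      rw [substF_var, hφ₀]
    have hsub2 : φ₀.substF vv₀ = φ₀.substF (fun a => Term.var a) := by
      apply substF_congr
      intro a ha
      have haV : a ∈ V' := by
        apply hfvφ
        rw [← hφ₀, fvF_upF]
        exact ha
      rw [hvv₀pos a haV]
    have := truth w henum hgenum φ₀ w vv₀ hvvD
    rw [hφ₀] at this
    rw [this, hsub2, hsub, hTw]
  -- apply validity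
  obtain ⟨δ, hδΔ, hδF⟩ := h (CM w) w vv₀ hvvD (by
    intro γ hγ
    rw [hForce γ (Finset.mem_union_left _ hγ)]
    exact hSsub (by exact_mod_cast hγ))
  rw [hForce δ (Finset.mem_union_right _ hδΔ)] at hδF
  exact hnthm (Thm.mem hδF hδΔ)

end Compl

/-- completeness of LJm+(cut) for first-order Kripke semantics. -/
theorem LJm_cut_complete {Γ Δ : Finset (IFormula L ℕ)} (h : FOValid L Γ Δ) :
    LJm L true Γ Δ := by
  exact Compl.main_complete h
end
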